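/- arXiv:2201.06475 — 5 statements merged into one kernel-verified Lean document; each statement's English description precedes it below -/
import Mathlib

section
/- For every n ≥ 1 and every coloring c : Fin n × Fin n → Option Bool of the n×n Hex board, it is not the case that both Red wins c and Blue wins c. -/
/-- Hex adjacency on the integer grid: `p` and `q` are adjacent iff
`q - p ∈ {(1,0), (-1,0), (0,1), (0,-1), (1,1), (-1,-1)}`. -/
def HexAdj (p q : ℤ × ℤ) : Prop :=
  q - p ∈ ({(1, 0), (-1, 0), (0, 1), (0, -1), (1, 1), (-1, -1)} : Set (ℤ × ℤ))

/-- The integer coordinates of a cell of the `n × n` board. -/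
def finCell {n : ℕ} (p : Fin n × Fin n) : ℤ × ℤ := ((p.1 : ℤ), (p.2 : ℤ))

/-- Red wins a (partial) coloring of the `n × n` Hex board: there is a finite sequence of
cells, consecutive ones adjacent, all colored `some true`, whose first cell has first
coordinate `0` and whose last cell has first coordinate `n - 1`. -/
def RedWinsFin {n : ℕ} (c : Fin n × Fin n → Option Bool) : Prop :=
  ∃ k : ℕ, ∃ f : Fin (k + 1) → Fin n × Fin n,
    (∀ i : Fin k, HexAdj (finCell (f i.castSucc)) (finCell (f i.succ))) ∧
    (∀ i, c (f i) = some true) ∧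
    ((f 0).1 : ℕ) = 0 ∧ ((f (Fin.last k)).1 : ℕ) = n - 1

/-- Blue wins a (partial) coloring of the `n × n` Hex board: there is a finite sequence of
cells, consecutive ones adjacent, all colored `some false`, whose first cell has second
coordinate `0` and whose last cell has second coordinate `n - 1`. -/
def BlueWinsFin {n : ℕ} (c : Fin n × Fin n → Option Bool) : Prop :=
  ∃ k : ℕ, ∃ f : Fin (k + 1) → Fin n × Fin n,
    (∀ i : Fin k, HexAdj (finCell (f i.castSucc)) (finCell (f i.succ))) ∧
    (∀ i, c (f i) = some false) ∧
    ((f 0).2 : ℕ) = 0 ∧ ((f (Fin.last k)).2 : ℕ) = n - 1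

namespace HexAux

/-- crossing of the edge `a-b` with the downward half-open strip ray below `z`. -/
def CrossP (a b z : ℤ × ℤ) : Prop :=
  a.1 ≠ b.1 ∧ (if a.1 < b.1 then a.1 else b.1) = z.1 ∧ (if a.1 < b.1 then a.2 else b.2) < z.2

instance (a b z : ℤ × ℤ) : Decidable (CrossP a b z) := by unfold CrossP; infer_instance

def FP (u v z : ℤ × ℤ) : Prop := u.1 < v.1 ∧ z.1 = v.1 ∧ z.2 ≤ u.2

instance (u v z : ℤ × ℤ) : Decidable (FP u v z) := by unfold FP; infer_instance

def cInd (a b z : ℤ × ℤ) : ZMod 2 := if CrossP a b z then 1 else 0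
def fInd (u v z : ℤ × ℤ) : ZMod 2 := if FP u v z then 1 else 0
def gInd (z w : ℤ × ℤ) : ZMod 2 := if z.1 < w.1 then 1 else 0

lemma ind_helper {X A Y B : Prop} [Decidable X] [Decidable A] [Decidable Y] [Decidable B]
    (h : (X ↔ Y) ↔ (A ↔ B)) :
    ((if X then (1 : ZMod 2) else 0) - (if Y then 1 else 0)) =
      (if B then (1 : ZMod 2) else 0) - (if A then 1 else 0) := by
  by_cases hX : X <;> by_cases hY : Y <;> by_cases hA : A <;> by_cases hB : B <;>
    simp_all <;> decide

lemma ind_helper2 {X A B : Prop} [Decidable X] [Decidable A] [Decidable B]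
    (h : X ↔ ¬ (A ↔ B)) :
    (if X then (1 : ZMod 2) else 0) =
      (if B then (1 : ZMod 2) else 0) - (if A then 1 else 0) := by
  by_cases hX : X <;> by_cases hA : A <;> by_cases hB : B <;> simp_all <;> decide

set_option maxHeartbeats 1000000 in
lemma key1 (a b u v : ℤ × ℤ) (hab : HexAdj a b)
    (huv : (v.1 - u.1 = 1 ∧ v.2 - u.2 = 0) ∨ (v.1 - u.1 = 0 ∧ v.2 - u.2 = 1) ∨
      (v.1 - u.1 = 1 ∧ v.2 - u.2 = 1))
    (hau : a ≠ u) (hav : a ≠ v) (hbu : b ≠ u) (hbv : b ≠ v) :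
    ((CrossP a b u ↔ CrossP a b v) ↔ (FP u v a ↔ FP u v b)) := by
  simp only [HexAdj, Set.mem_insert_iff, Set.mem_singleton_iff, Prod.ext_iff,
    Prod.fst_sub, Prod.snd_sub] at hab
  rw [Ne, Prod.ext_iff, not_and_or] at hau hav hbu hbv
  unfold CrossP FP
  split_ifs <;> omega

set_option maxHeartbeats 1000000 in
lemma key2 (a b z : ℤ × ℤ) (hab : HexAdj a b) (haz : a ≠ z) (hbz : b ≠ z)
    (ha2 : a.2 ≤ z.2) (hb2 : b.2 ≤ z.2) :
    (CrossP a b z ↔ ¬ (z.1 < a.1 ↔ z.1 < b.1)) := by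
  simp only [HexAdj, Set.mem_insert_iff, Set.mem_singleton_iff, Prod.ext_iff,
    Prod.fst_sub, Prod.snd_sub] at hab
  rw [Ne, Prod.ext_iff, not_and_or] at haz hbz
  unfold CrossP
  split_ifs <;> omega

/-- the crossing-parity of the curve `P` (with `k+1` edges) with the ray below `z`. -/
def sig (k : ℕ) (P : ℕ → ℤ × ℤ) (z : ℤ × ℤ) : ZMod 2 :=
  ∑ i ∈ Finset.range (k + 1), cInd (P i) (P (i + 1)) z

lemma sig_step (n : ℤ) (k : ℕ) (P : ℕ → ℤ × ℤ)
    (hadj : ∀ i, i < k + 1 → HexAdj (P i) (P (i + 1)))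
    (u v : ℤ × ℤ)
    (hne : ∀ i, i ≤ k + 1 → P i ≠ u ∧ P i ≠ v)
    (huv : (v.1 - u.1 = 1 ∧ v.2 - u.2 = 0) ∨ (v.1 - u.1 = 0 ∧ v.2 - u.2 = 1) ∨
      (v.1 - u.1 = 1 ∧ v.2 - u.2 = 1))
    (h0 : (P 0).1 = 0) (hN : (P (k + 1)).1 = n)
    (hu : 0 ≤ u.1) (hv : v.1 < n) :
    sig k P u = sig k P v := by
  have key : ∀ i ∈ Finset.range (k + 1),
      cInd (P i) (P (i + 1)) u - cInd (P i) (P (i + 1)) v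
        = fInd u v (P (i + 1)) - fInd u v (P i) := by
    intro i hi
    rw [Finset.mem_range] at hi
    exact ind_helper (key1 (P i) (P (i + 1)) u v (hadj i hi) huv
      (hne i (by omega)).1 (hne i (by omega)).2
      (hne (i + 1) (by omega)).1 (hne (i + 1) (by omega)).2)
  have hsum : sig k P u - sig k P v
      = ∑ i ∈ Finset.range (k + 1), (fInd u v (P (i + 1)) - fInd u v (P i)) := by
    rw [sig, sig, ← Finset.sum_sub_distrib]
    exact Finset.sum_congr rfl key
  rw [Finset.sum_range_sub (fun i => fInd u v (P i))] at hsum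
  have hA : fInd u v (P (k + 1)) = 0 := by
    rw [fInd, if_neg]; rintro ⟨h1, h2, h3⟩; omega
  have hB : fInd u v (P 0) = 0 := by
    rw [fInd, if_neg]; rintro ⟨h1, h2, h3⟩; omega
  rw [hA, hB, sub_zero] at hsum
  exact sub_eq_zero.mp hsum

lemma sig_bot (k : ℕ) (P : ℕ → ℤ × ℤ)
    (hy : ∀ i, i ≤ k + 1 → 0 ≤ (P i).2)
    (z : ℤ × ℤ) (hz : z.2 ≤ 0) : sig k P z = 0 := by
  rw [sig]
  apply Finset.sum_eq_zero
  intro i hi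
  rw [Finset.mem_range] at hi
  rw [cInd, if_neg]
  rintro ⟨h1, h2, h3⟩
  have g1 := hy i (by omega)
  have g2 := hy (i + 1) (by omega)
  split_ifs at h3 <;> omega

lemma sig_top (n : ℤ) (k : ℕ) (P : ℕ → ℤ × ℤ)
    (hadj : ∀ i, i < k + 1 → HexAdj (P i) (P (i + 1)))
    (z : ℤ × ℤ)
    (hne : ∀ i, i ≤ k + 1 → P i ≠ z)
    (hy : ∀ i, i ≤ k + 1 → (P i).2 ≤ z.2)
    (h0 : (P 0).1 = 0) (hN : (P (k + 1)).1 = n)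
    (hz : 0 ≤ z.1) (hz2 : z.1 < n) :
    sig k P z = 1 := by
  have key : ∀ i ∈ Finset.range (k + 1),
      cInd (P i) (P (i + 1)) z = gInd z (P (i + 1)) - gInd z (P i) := by
    intro i hi
    rw [Finset.mem_range] at hi
    exact ind_helper2 (key2 (P i) (P (i + 1)) z (hadj i hi)
      (hne i (by omega)) (hne (i + 1) (by omega))
      (hy i (by omega)) (hy (i + 1) (by omega)))
  rw [sig, Finset.sum_congr rfl key, Finset.sum_range_sub (fun i => gInd z (P i))]
  have hA : gInd z (P (k + 1)) = 1 := by rw [gInd, if_pos]; omega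
  have hB : gInd z (P 0) = 0 := by rw [gInd, if_neg]; omega
  rw [hA, hB, sub_zero]

lemma finCell_fst {n : ℕ} (p : Fin n × Fin n) : (finCell p).1 = ((p.1 : ℕ) : ℤ) := rfl

lemma finCell_snd {n : ℕ} (p : Fin n × Fin n) : (finCell p).2 = ((p.2 : ℕ) : ℤ) := rfl

lemma finCell_inj {n : ℕ} {p q : Fin n × Fin n} (h : finCell p = finCell q) : p = q := by
  rw [finCell, finCell, Prod.ext_iff] at h
  obtain ⟨h1, h2⟩ := h
  refine Prod.ext ?_ ?_ <;> apply Fin.ext <;> omega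

end HexAux

/-- At most one player wins any coloring of the `n × n` Hex board. -/
theorem finite_hex_at_most_one_winner (n : ℕ) (hn : 1 ≤ n)
    (c : Fin n × Fin n → Option Bool) :
    ¬ (RedWinsFin c ∧ BlueWinsFin c) := by
  open HexAux in
  rintro ⟨⟨k, f, fadj, fred, f0, flast⟩, ⟨m, g, gadj, gblue, g0, glast⟩⟩
  -- the extended red curve
  set P : ℕ → ℤ × ℤ := fun i =>
    if h : i < k + 1 then finCell (f ⟨i, h⟩)
    else ((n : ℤ), (((f (Fin.last k)).2 : ℕ) : ℤ)) with hPdef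
  have hPlt : ∀ i (h : i < k + 1), P i = finCell (f ⟨i, h⟩) := by
    intro i h; simp only [hPdef, dif_pos h]
  have hPlast : P (k + 1) = ((n : ℤ), (((f (Fin.last k)).2 : ℕ) : ℤ)) := by
    simp only [hPdef, dif_neg (by omega : ¬ (k + 1 < k + 1))]
  have hPlast1 : (P (k + 1)).1 = (n : ℤ) := by rw [hPlast]
  have hPlast2 : (P (k + 1)).2 = (((f (Fin.last k)).2 : ℕ) : ℤ) := by rw [hPlast]
  have hf1 : ((f (Fin.last k)).1 : ℕ) = n - 1 := flast
  -- basic coordinates of P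
  have h0 : (P 0).1 = 0 := by
    rw [hPlt 0 (by omega)]
    have h00 : (⟨0, by omega⟩ : Fin (k + 1)) = 0 := rfl
    rw [h00, HexAux.finCell_fst]
    exact_mod_cast congrArg (Nat.cast : ℕ → ℤ) f0
  -- adjacency along the extended curve
  have hadjP : ∀ i, i < k + 1 → HexAdj (P i) (P (i + 1)) := by
    intro i hi
    rcases Nat.lt_or_ge i k with hik | hik
    · rw [hPlt i (by omega), hPlt (i + 1) (by omega)]
      exact fadj ⟨i, hik⟩
    · have hik' : i = k := by omega
      subst hik'
      rw [hPlt i (by omega), hPlast]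
      have hli : (⟨i, by omega⟩ : Fin (i + 1)) = Fin.last i := rfl
      rw [hli]
      simp only [HexAdj, Set.mem_insert_iff, Set.mem_singleton_iff, Prod.ext_iff,
        Prod.fst_sub, Prod.snd_sub, HexAux.finCell_fst, HexAux.finCell_snd]
      have hb := (f (Fin.last i)).1.isLt
      omega
  -- bounds for the second coordinates of P
  have hy : ∀ i, i ≤ k + 1 → 0 ≤ (P i).2 ∧ (P i).2 ≤ (n : ℤ) - 1 := by
    intro i hi
    rcases Nat.lt_or_ge i (k + 1) with hik | hik
    · rw [hPlt i hik, HexAux.finCell_snd]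
      have hb := (f ⟨i, hik⟩).2.isLt
      omega
    · have hik' : i = k + 1 := by omega
      subst hik'
      rw [hPlast2]
      have hb := (f (Fin.last k)).2.isLt
      omega
  -- the red curve avoids all blue cells
  have hne : ∀ i, i ≤ k + 1 → ∀ j : Fin (m + 1), P i ≠ finCell (g j) := by
    intro i hi j
    rcases Nat.lt_or_ge i (k + 1) with hik | hik
    · rw [hPlt i hik]
      intro h
      have heq := HexAux.finCell_inj h
      have h1 := fred ⟨i, hik⟩
      rw [heq] at h1
      rw [gblue j] at h1
      exact Bool.noConfusion (Option.some.inj h1)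
    · have hik' : i = k + 1 := by omega
      subst hik'
      intro h
      have h1 := congrArg Prod.fst h
      rw [hPlast1, HexAux.finCell_fst] at h1
      have hb := (g j).1.isLt
      omega
  -- sig is constant along the blue path
  have main : ∀ j : ℕ, ∀ hj : j < m + 1,
      HexAux.sig k P (finCell (g ⟨j, hj⟩)) = HexAux.sig k P (finCell (g 0)) := by
    intro j
    induction j with
    | zero => intro hj; rfl
    | succ j ih =>
      intro hj
      have hj' : j < m + 1 := by omega
      have hadj' : HexAdj (finCell (g ⟨j, hj'⟩)) (finCell (g ⟨j + 1, hj⟩)) :=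
        gadj ⟨j, by omega⟩
      rw [← ih hj']
      set u := finCell (g ⟨j, hj'⟩) with hu
      set v := finCell (g ⟨j + 1, hj⟩) with hv
      have hub : 0 ≤ u.1 ∧ u.1 ≤ (n : ℤ) - 1 := by
        rw [hu, HexAux.finCell_fst]; have := (g ⟨j, hj'⟩).1.isLt; omega
      have hvb : 0 ≤ v.1 ∧ v.1 ≤ (n : ℤ) - 1 := by
        rw [hv, HexAux.finCell_fst]; have := (g ⟨j + 1, hj⟩).1.isLt; omega
      have hneu : ∀ i, i ≤ k + 1 → P i ≠ u ∧ P i ≠ v :=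
        fun i hi => ⟨hne i hi _, hne i hi _⟩
      have hnev : ∀ i, i ≤ k + 1 → P i ≠ v ∧ P i ≠ u :=
        fun i hi => ⟨hne i hi _, hne i hi _⟩
      simp only [HexAdj, Set.mem_insert_iff, Set.mem_singleton_iff, Prod.ext_iff,
        Prod.fst_sub, Prod.snd_sub] at hadj'
      rcases hadj' with h | h | h | h | h | h
      · exact (HexAux.sig_step n k P hadjP u v hneu (by omega) h0 hPlast1
          (by omega) (by omega)).symm
      · exact HexAux.sig_step n k P hadjP v u hnev (by omega) h0 hPlast1
          (by omega) (by omega)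
      · exact (HexAux.sig_step n k P hadjP u v hneu (by omega) h0 hPlast1
          (by omega) (by omega)).symm
      · exact HexAux.sig_step n k P hadjP v u hnev (by omega) h0 hPlast1
          (by omega) (by omega)
      · exact (HexAux.sig_step n k P hadjP u v hneu (by omega) h0 hPlast1
          (by omega) (by omega)).symm
      · exact HexAux.sig_step n k P hadjP v u hnev (by omega) h0 hPlast1
          (by omega) (by omega)
  -- sig at the start of the blue path is 0
  have hbot : HexAux.sig k P (finCell (g 0)) = 0 := by
    apply HexAux.sig_bot k P (fun i hi => (hy i hi).1)
    rw [HexAux.finCell_snd]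
    omega
  -- sig at the end of the blue path is 1
  have htop : HexAux.sig k P (finCell (g (Fin.last m))) = 1 := by
    apply HexAux.sig_top n k P hadjP (finCell (g (Fin.last m))) (fun i hi => hne i hi _)
    · intro i hi
      have h1 := (hy i hi).2
      have h2 : ((g (Fin.last m)).2 : ℕ) = n - 1 := glast
      rw [HexAux.finCell_snd]
      omega
    · exact h0
    · exact hPlast1
    · rw [HexAux.finCell_fst]; omega
    · rw [HexAux.finCell_fst]; have := (g (Fin.last m)).1.isLt; omega
  have hlastm : (Fin.last m) = (⟨m, by omega⟩ : Fin (m + 1)) := rfl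
  rw [hlastm] at htop
  rw [main m (by omega)] at htop
  rw [hbot] at htop
  exact absurd htop (by decide)
end

section
/- For every n ≥ 1 and every total coloring χ : Fin n × Fin n → Bool of the n×n Hex board, at least one of the two players wins: either Red wins the induced coloring or Blue wins it (hence, combined with uniqueness, exactly one player wins). -/
lemma hexAdj_iff (p q : ℤ × ℤ) : HexAdj p q ↔
    (q.1 = p.1 + 1 ∧ q.2 = p.2) ∨ (q.1 = p.1 - 1 ∧ q.2 = p.2) ∨
    (q.1 = p.1 ∧ q.2 = p.2 + 1) ∨ (q.1 = p.1 ∧ q.2 = p.2 - 1) ∨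
    (q.1 = p.1 + 1 ∧ q.2 = p.2 + 1) ∨ (q.1 = p.1 - 1 ∧ q.2 = p.2 - 1) := by
  simp only [HexAdj, Set.mem_insert_iff, Set.mem_singleton_iff, Prod.ext_iff,
    Prod.fst_sub, Prod.snd_sub]
  constructor <;> intro h <;> omega

lemma hexAdj_symm {p q : ℤ × ℤ} (h : HexAdj p q) : HexAdj q p := by
  rw [hexAdj_iff] at h ⊢; omega

def HexStep (S : Set (ℤ × ℤ)) (a b : ℤ × ℤ) : Prop := a ∈ S ∧ b ∈ S ∧ HexAdj a b

def Conn (S : Set (ℤ × ℤ)) : ℤ × ℤ → ℤ × ℤ → Prop := Relation.ReflTransGen (HexStep S)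

lemma conn_symm {S : Set (ℤ × ℤ)} {a b : ℤ × ℤ} (h : Conn S a b) : Conn S b a :=
  (@Relation.ReflTransGen.stdSymm _ (HexStep S) ⟨fun _ _ h => ⟨h.2.1, h.1, hexAdj_symm h.2.2⟩⟩).symm _ _ h

lemma conn_trans {S : Set (ℤ × ℤ)} {a b c : ℤ × ℤ} (h : Conn S a b) (h' : Conn S b c) :
    Conn S a c := Relation.ReflTransGen.trans h h'

lemma conn_to_path {S : Set (ℤ × ℤ)} {a b : ℤ × ℤ} (h : Conn S a b) (ha : a ∈ S) :
    ∃ k : ℕ, ∃ f : Fin (k + 1) → ℤ × ℤ, f 0 = a ∧ f (Fin.last k) = b ∧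
      (∀ i, f i ∈ S) ∧ ∀ i : Fin k, HexAdj (f i.castSucc) (f i.succ) := by
  induction h with
  | refl => exact ⟨0, fun _ => a, rfl, rfl, fun _ => ha, fun i => i.elim0⟩
  | @tail b c hab hbc ih =>
    obtain ⟨k, f, h0, hl, hm, hadj⟩ := ih
    refine ⟨k + 1, (Fin.snoc f c : Fin (k+2) → ℤ × ℤ), ?_, ?_, ?_, ?_⟩
    · rw [show (0 : Fin (k+2)) = Fin.castSucc 0 from rfl, Fin.snoc_castSucc]; exact h0
    · rw [Fin.snoc_last]
    · intro i
      rcases Fin.eq_castSucc_or_eq_last i with ⟨j, rfl⟩ | rfl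
      · rw [Fin.snoc_castSucc]; exact hm j
      · rw [Fin.snoc_last]; exact hbc.2.1
    · intro i
      rcases Fin.eq_castSucc_or_eq_last i with ⟨j, rfl⟩ | rfl
      · rw [Fin.snoc_castSucc, Fin.succ_castSucc, Fin.snoc_castSucc]
        exact hadj j
      · rw [Fin.snoc_castSucc, Fin.succ_last, Fin.snoc_last, hl]
        exact hbc.2.2

def maj (x y z : Bool) : Bool := (x && y) || (x && z) || (y && z)

lemma maj_two (x y z v : Bool) (h : maj x y z = v) :
    (x = v ∧ y = v) ∨ (x = v ∧ z = v) ∨ (y = v ∧ z = v) := by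
  revert h; cases x <;> cases y <;> cases z <;> cases v <;> decide

lemma cross (c : ℤ × ℤ → Bool) (b : Bool) (z z' : ℤ × ℤ) (hadj : HexAdj z z')
    (h1 : maj (c z) (c (z + (1,0))) (c (z + (1,1))) = b)
    (h2 : maj (c z') (c (z' + (1,0))) (c (z' + (1,1))) = b) :
    ∃ w w', (w = z ∨ w = z + (1,0) ∨ w = z + (1,1)) ∧ c w = b ∧
      (w' = z' ∨ w' = z' + (1,0) ∨ w' = z' + (1,1)) ∧ c w' = b ∧
      (w = w' ∨ HexAdj w w') := by
  rw [hexAdj_iff] at hadj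
  rcases maj_two _ _ _ _ h1 with ⟨e1, e2⟩ | ⟨e1, e2⟩ | ⟨e1, e2⟩ <;>
  rcases maj_two _ _ _ _ h2 with ⟨e3, e4⟩ | ⟨e3, e4⟩ | ⟨e3, e4⟩ <;>
  rcases hadj with h | h | h | h | h | h <;>
  (
  first
  |
    (refine ⟨z, z', Or.inl rfl, by assumption, Or.inl rfl, by assumption, ?_⟩;
      first
      | (left; rw [Prod.ext_iff]; (try simp only [Prod.fst_add, Prod.snd_add]); omega)
      | (right; rw [hexAdj_iff]; (try simp only [Prod.fst_add, Prod.snd_add]); omega))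
  |
    (refine ⟨z, z' + (1,0), Or.inl rfl, by assumption, Or.inr (Or.inl rfl), by assumption, ?_⟩;
      first
      | (left; rw [Prod.ext_iff]; (try simp only [Prod.fst_add, Prod.snd_add]); omega)
      | (right; rw [hexAdj_iff]; (try simp only [Prod.fst_add, Prod.snd_add]); omega))
  |
    (refine ⟨z, z' + (1,1), Or.inl rfl, by assumption, Or.inr (Or.inr rfl), by assumption, ?_⟩;
      first
      | (left; rw [Prod.ext_iff]; (try simp only [Prod.fst_add, Prod.snd_add]); omega)
      | (right; rw [hexAdj_iff]; (try simp only [Prod.fst_add, Prod.snd_add]); omega))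
  |
    (refine ⟨z + (1,0), z', Or.inr (Or.inl rfl), by assumption, Or.inl rfl, by assumption, ?_⟩;
      first
      | (left; rw [Prod.ext_iff]; (try simp only [Prod.fst_add, Prod.snd_add]); omega)
      | (right; rw [hexAdj_iff]; (try simp only [Prod.fst_add, Prod.snd_add]); omega))
  |
    (refine ⟨z + (1,0), z' + (1,0), Or.inr (Or.inl rfl), by assumption, Or.inr (Or.inl rfl), by assumption, ?_⟩;
      first
      | (left; rw [Prod.ext_iff]; (try simp only [Prod.fst_add, Prod.snd_add]); omega)
      | (right; rw [hexAdj_iff]; (try simp only [Prod.fst_add, Prod.snd_add]); omega))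
  |
    (refine ⟨z + (1,0), z' + (1,1), Or.inr (Or.inl rfl), by assumption, Or.inr (Or.inr rfl), by assumption, ?_⟩;
      first
      | (left; rw [Prod.ext_iff]; (try simp only [Prod.fst_add, Prod.snd_add]); omega)
      | (right; rw [hexAdj_iff]; (try simp only [Prod.fst_add, Prod.snd_add]); omega))
  |
    (refine ⟨z + (1,1), z', Or.inr (Or.inr rfl), by assumption, Or.inl rfl, by assumption, ?_⟩;
      first
      | (left; rw [Prod.ext_iff]; (try simp only [Prod.fst_add, Prod.snd_add]); omega)
      | (right; rw [hexAdj_iff]; (try simp only [Prod.fst_add, Prod.snd_add]); omega))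
  |
    (refine ⟨z + (1,1), z' + (1,0), Or.inr (Or.inr rfl), by assumption, Or.inr (Or.inl rfl), by assumption, ?_⟩;
      first
      | (left; rw [Prod.ext_iff]; (try simp only [Prod.fst_add, Prod.snd_add]); omega)
      | (right; rw [hexAdj_iff]; (try simp only [Prod.fst_add, Prod.snd_add]); omega))
  |
    (refine ⟨z + (1,1), z' + (1,1), Or.inr (Or.inr rfl), by assumption, Or.inr (Or.inr rfl), by assumption, ?_⟩;
      first
      | (left; rw [Prod.ext_iff]; (try simp only [Prod.fst_add, Prod.snd_add]); omega)
      | (right; rw [hexAdj_iff]; (try simp only [Prod.fst_add, Prod.snd_add]); omega)))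

def Yb (m : ℕ) : Set (ℤ × ℤ) := {z | 0 ≤ z.2 ∧ z.2 ≤ z.1 ∧ z.1 ≤ (m : ℤ) - 1}

def YS (m : ℕ) (c : ℤ × ℤ → Bool) (b : Bool) : Set (ℤ × ℤ) := {z | z ∈ Yb m ∧ c z = b}

def Ymaj (c : ℤ × ℤ → Bool) : ℤ × ℤ → Bool := fun z => maj (c z) (c (z + (1,0))) (c (z + (1,1)))

lemma tri_mem {m : ℕ} {z w : ℤ × ℤ} (hz : z ∈ Yb m)
    (hw : w = z ∨ w = z + (1,0) ∨ w = z + (1,1)) : w ∈ Yb (m+1) := by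
  obtain ⟨h1, h2, h3⟩ := hz
  rcases hw with rfl | rfl | rfl <;>
    refine ⟨?_, ?_, ?_⟩ <;>
    (try simp only [Prod.fst_add, Prod.snd_add]) <;> push_cast <;> omega

lemma tri_adj {z w w' : ℤ × ℤ} (hw : w = z ∨ w = z + (1,0) ∨ w = z + (1,1))
    (hw' : w' = z ∨ w' = z + (1,0) ∨ w' = z + (1,1)) : w = w' ∨ HexAdj w w' := by
  rcases hw with rfl | rfl | rfl <;> rcases hw' with rfl | rfl | rfl <;>
    first
    | (left; rfl)
    | (right; rw [hexAdj_iff]; simp [Prod.fst_add, Prod.snd_add])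

lemma lift {m : ℕ} {c : ℤ × ℤ → Bool} {b : Bool} {z z' : ℤ × ℤ}
    (hconn : Conn (YS m (Ymaj c) b) z z') (hz : z ∈ YS m (Ymaj c) b) :
    ∀ w w', (w = z ∨ w = z + (1,0) ∨ w = z + (1,1)) → c w = b →
      (w' = z' ∨ w' = z' + (1,0) ∨ w' = z' + (1,1)) → c w' = b →
      Conn (YS (m+1) c b) w w' := by
  induction hconn with
  | refl =>
    intro w w' hw hcw hw' hcw'
    rcases tri_adj hw hw' with rfl | hadj
    · exact Relation.ReflTransGen.refl
    · exact Relation.ReflTransGen.single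
        ⟨⟨tri_mem hz.1 hw, hcw⟩, ⟨tri_mem hz.1 hw', hcw'⟩, hadj⟩
  | @tail y z' hzy hstep ih =>
    intro w w' hw hcw hw' hcw'
    obtain ⟨hyS, hz'S, hadj⟩ := hstep
    obtain ⟨u, u', hu, hcu, hu', hcu', huu⟩ := cross c b y z' hadj hyS.2 hz'S.2
    have c1 : Conn (YS (m+1) c b) w u := ih w u hw hcw hu hcu
    have c2 : Conn (YS (m+1) c b) u u' := by
      rcases huu with rfl | hadj'
      · exact Relation.ReflTransGen.refl
      · exact Relation.ReflTransGen.single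
          ⟨⟨tri_mem hyS.1 hu, hcu⟩, ⟨tri_mem hz'S.1 hu', hcu'⟩, hadj'⟩
    have c3 : Conn (YS (m+1) c b) u' w' := by
      rcases tri_adj hu' hw' with rfl | hadj'
      · exact Relation.ReflTransGen.refl
      · exact Relation.ReflTransGen.single
          ⟨⟨tri_mem hz'S.1 hu', hcu'⟩, ⟨tri_mem hz'S.1 hw', hcw'⟩, hadj'⟩
    exact conn_trans c1 (conn_trans c2 c3)

lemma pick1 {c : ℤ × ℤ → Bool} {b : Bool} {z : ℤ × ℤ} (hz : Ymaj c z = b) (h0 : z.2 = 0) :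
    ∃ w, (w = z ∨ w = z + (1,0) ∨ w = z + (1,1)) ∧ c w = b ∧ w.2 = 0 := by
  rcases maj_two _ _ _ _ hz with ⟨e1, e2⟩ | ⟨e1, e2⟩ | ⟨e1, e2⟩
  · exact ⟨z, Or.inl rfl, e1, h0⟩
  · exact ⟨z, Or.inl rfl, e1, h0⟩
  · exact ⟨z + (1,0), Or.inr (Or.inl rfl), e1, by simp only [Prod.snd_add]; omega⟩

lemma pick2 {c : ℤ × ℤ → Bool} {b : Bool} {z : ℤ × ℤ} (hz : Ymaj c z = b) (h0 : z.1 = z.2) :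
    ∃ w, (w = z ∨ w = z + (1,0) ∨ w = z + (1,1)) ∧ c w = b ∧ w.1 = w.2 := by
  rcases maj_two _ _ _ _ hz with ⟨e1, e2⟩ | ⟨e1, e2⟩ | ⟨e1, e2⟩
  · exact ⟨z, Or.inl rfl, e1, h0⟩
  · exact ⟨z, Or.inl rfl, e1, h0⟩
  · exact ⟨z + (1,1), Or.inr (Or.inr rfl), e2,
      by simp only [Prod.fst_add, Prod.snd_add]; omega⟩

lemma pick3 {c : ℤ × ℤ → Bool} {b : Bool} {z : ℤ × ℤ} {m : ℕ} (hz : Ymaj c z = b)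
    (h0 : z.1 = (m : ℤ) - 1) :
    ∃ w, (w = z ∨ w = z + (1,0) ∨ w = z + (1,1)) ∧ c w = b ∧ w.1 = ((m : ℤ) + 1) - 1 := by
  rcases maj_two _ _ _ _ hz with ⟨e1, e2⟩ | ⟨e1, e2⟩ | ⟨e1, e2⟩
  · exact ⟨z + (1,0), Or.inr (Or.inl rfl), e2, by simp only [Prod.fst_add]; omega⟩
  · exact ⟨z + (1,1), Or.inr (Or.inr rfl), e2, by simp only [Prod.fst_add]; omega⟩
  · exact ⟨z + (1,0), Or.inr (Or.inl rfl), e1, by simp only [Prod.fst_add]; omega⟩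

def YWin (m : ℕ) (c : ℤ × ℤ → Bool) (b : Bool) : Prop :=
  ∃ p q r, p ∈ YS m c b ∧ q ∈ YS m c b ∧ r ∈ YS m c b ∧
    p.2 = 0 ∧ q.1 = q.2 ∧ r.1 = (m : ℤ) - 1 ∧
    Conn (YS m c b) p q ∧ Conn (YS m c b) p r

theorem Ythm : ∀ m : ℕ, 1 ≤ m → ∀ c : ℤ × ℤ → Bool, ∃ b, YWin m c b := by
  intro m hm
  induction m, hm using Nat.le_induction with
  | base =>
    intro c
    refine ⟨c (0,0), (0,0), (0,0), (0,0), ?_, ?_, ?_, rfl, rfl, by norm_num, .refl, .refl⟩ <;>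
      exact ⟨⟨le_refl 0, le_refl 0, by norm_num⟩, rfl⟩
  | succ m hm ih =>
    intro c
    obtain ⟨b, p, q, r, hp, hq, hr, hp0, hqd, hrx, cpq, cpr⟩ := ih (Ymaj c)
    obtain ⟨wp, hwp, hcwp, hwp0⟩ := pick1 hp.2 hp0
    obtain ⟨wq, hwq, hcwq, hwqd⟩ := pick2 hq.2 hqd
    obtain ⟨wr, hwr, hcwr, hwrx⟩ := pick3 hr.2 hrx
    refine ⟨b, wp, wq, wr, ⟨tri_mem hp.1 hwp, hcwp⟩, ⟨tri_mem hq.1 hwq, hcwq⟩,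
      ⟨tri_mem hr.1 hwr, hcwr⟩, hwp0, hwqd, by push_cast; omega, ?_, ?_⟩
    · exact lift cpq hp wp wq hwp hcwp hwq hcwq
    · exact lift cpr hp wp wr hwp hcwp hwr hcwr

lemma escape {S H : Set (ℤ × ℤ)} {g : ℤ × ℤ → ℤ} {c0 : ℤ}
    (hSH : ∀ z ∈ S, z ∈ H ∨ g z < c0)
    (hg : ∀ a b : ℤ × ℤ, HexAdj a b → g a ≤ g b + 1)
    (hH : ∀ z ∈ H, c0 ≤ g z)
    {a z : ℤ × ℤ} (hconn : Conn S a z) (ha : a ∈ H) :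
    (z ∈ H ∧ Conn H a z) ∨ ∃ w, w ∈ H ∧ Conn H a w ∧ g w = c0 := by
  induction hconn with
  | refl => exact Or.inl ⟨ha, .refl⟩
  | @tail y z hay hstep ih =>
    rcases ih with ⟨hyH, hc⟩ | hr
    · obtain ⟨hyS, hzS, hadj⟩ := hstep
      rcases hSH z hzS with hzH | hlt
      · exact Or.inl ⟨hzH, hc.tail ⟨hyH, hzH, hadj⟩⟩
      · refine Or.inr ⟨y, hyH, hc, ?_⟩
        have h1 := hg y z hadj
        have h2 := hH y hyH
        omega
    · exact Or.inr hr

def hexReg (n : ℕ) : Set (ℤ × ℤ) :=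
  {z | (n : ℤ) - 1 ≤ z.1 ∧ z.1 ≤ 2 * (n : ℤ) - 2 ∧ 0 ≤ z.2 ∧ z.2 ≤ (n : ℤ) - 1}

def toFin (n : ℕ) (hn : 1 ≤ n) (z : ℤ × ℤ) : Fin n × Fin n :=
  (⟨min (z.1 - ((n : ℤ) - 1)).toNat (n - 1), by omega⟩, ⟨min z.2.toNat (n - 1), by omega⟩)

def hexC (n : ℕ) (hn : 1 ≤ n) (χ : Fin n × Fin n → Bool) : ℤ × ℤ → Bool := fun z =>
  if ((n : ℤ) - 1 ≤ z.1 ∧ z.1 ≤ 2 * (n : ℤ) - 2 ∧ 0 ≤ z.2 ∧ z.2 ≤ (n : ℤ) - 1)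
    then χ (toFin n hn z) else decide (z.2 < (n : ℤ))

lemma hexC_in {n : ℕ} (hn : 1 ≤ n) (χ : Fin n × Fin n → Bool) {z : ℤ × ℤ}
    (hz : z ∈ hexReg n) : hexC n hn χ z = χ (toFin n hn z) := if_pos hz

lemma hexC_out {n : ℕ} (hn : 1 ≤ n) (χ : Fin n × Fin n → Bool) {z : ℤ × ℤ}
    (hz : z ∉ hexReg n) : hexC n hn χ z = decide (z.2 < (n : ℤ)) := if_neg hz

lemma finCell_toFin {n : ℕ} (hn : 1 ≤ n) {z : ℤ × ℤ} (hz : z ∈ hexReg n) :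
    finCell (toFin n hn z) = (z.1 - ((n : ℤ) - 1), z.2) := by
  obtain ⟨h1, h2, h3, h4⟩ := hz
  unfold finCell toFin
  rw [Prod.ext_iff]
  constructor <;> simp only [] <;> push_cast <;> omega

lemma hexAdj_shift {a b : ℤ × ℤ} (t : ℤ) (h : HexAdj a b) :
    HexAdj (a.1 - t, a.2) (b.1 - t, b.2) := by
  rw [hexAdj_iff] at h ⊢
  simp only []
  omega

lemma toFin_fst {n : ℕ} (hn : 1 ≤ n) (z : ℤ × ℤ) :
    ((toFin n hn z).1 : ℕ) = min (z.1 - ((n : ℤ) - 1)).toNat (n - 1) := rfl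

lemma toFin_snd {n : ℕ} (hn : 1 ≤ n) (z : ℤ × ℤ) :
    ((toFin n hn z).2 : ℕ) = min z.2.toNat (n - 1) := rfl

/-- Every total coloring of the `n × n` Hex board has at least one winner. -/
theorem finite_hex_at_least_one_winner (n : ℕ) (hn : 1 ≤ n)
    (χ : Fin n × Fin n → Bool) :
    RedWinsFin (fun p => some (χ p)) ∨ BlueWinsFin (fun p => some (χ p)) := by
  set c := hexC n hn χ with hc
  have hm1 : 1 ≤ 2 * n - 1 := by omega
  have hmz : ((2 * n - 1 : ℕ) : ℤ) = 2 * (n : ℤ) - 1 := by push_cast; omega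
  obtain ⟨b, p, q, r, hp, hq, hr, hp0, hqd, hrx, cpq, cpr⟩ := Ythm (2 * n - 1) hm1 c
  rw [hmz] at hrx
  cases b
  case true =>
    -- RED wins
    left
    set H : Set (ℤ × ℤ) := {z | z ∈ hexReg n ∧ c z = true} with hH
    have key : ∀ z ∈ YS (2 * n - 1) c true, z ∈ H ∨ z.1 < (n : ℤ) - 1 := by
      rintro z ⟨hzY, hzc⟩
      by_cases hreg : z ∈ hexReg n
      · exact Or.inl ⟨hreg, hzc⟩
      · obtain ⟨y1, y2, y3⟩ := hzY
        rw [hmz] at y3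
        rcases (show z.1 < (n : ℤ) - 1 ∨ (n : ℤ) - 1 < z.2 by
          by_contra hcon
          push_neg at hcon
          exact hreg ⟨hcon.1, by omega, y1, hcon.2⟩) with h | h
        · exact Or.inr h
        · exfalso
          rw [hc, hexC_out hn χ hreg] at hzc
          simp only [decide_eq_true_eq] at hzc
          omega
    have hrH : r ∈ H := by
      rcases key r hr with h | h
      · exact h
      · exfalso; omega
    have hconn : Conn (YS (2 * n - 1) c true) r q := conn_trans (conn_symm cpr) cpq
    have hesc := escape key (fun a b h => by rw [hexAdj_iff] at h; omega)
      (fun z hz => hz.1.1) hconn hrH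
    have hw : ∃ w, w ∈ H ∧ Conn H r w ∧ w.1 = (n : ℤ) - 1 := by
      rcases hesc with ⟨hqH, hcq⟩ | ⟨w, hwH, hcw, hw1⟩
      · refine ⟨q, hqH, hcq, ?_⟩
        have h1 := hqH.1.1
        have h2 := hqH.1.2.2.2
        omega
      · exact ⟨w, hwH, hcw, hw1⟩
    obtain ⟨w, hwH, hcw, hw1⟩ := hw
    obtain ⟨k, f, hf0, hfl, hfm, hfadj⟩ := conn_to_path (conn_symm hcw) hwH
    refine ⟨k, fun i => toFin n hn (f i), ?_, ?_, ?_, ?_⟩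
    · intro i
      rw [finCell_toFin hn (hfm i.castSucc).1, finCell_toFin hn (hfm i.succ).1]
      exact hexAdj_shift _ (hfadj i)
    · intro i
      have h2 := (hfm i).2
      rw [hc, hexC_in hn χ (hfm i).1] at h2
      exact congrArg some h2
    · have h2 : ((toFin n hn (f 0)).1 : ℕ) = 0 := by
        rw [hf0, toFin_fst]; omega
      exact h2
    · obtain ⟨a1, a2, a3, a4⟩ := (hfm (Fin.last k)).1
      rw [hfl] at a1 a2 a3 a4
      have h2 : ((toFin n hn (f (Fin.last k))).1 : ℕ) = n - 1 := by
        rw [hfl, toFin_fst]; omega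
      exact h2
  case false =>
    -- BLUE wins
    right
    set H : Set (ℤ × ℤ) := {z | z ∈ hexReg n ∧ c z = false} with hH
    have key : ∀ z ∈ YS (2 * n - 1) c false, z ∈ H ∨ -z.2 < -((n : ℤ) - 1) := by
      rintro z ⟨hzY, hzc⟩
      by_cases hreg : z ∈ hexReg n
      · exact Or.inl ⟨hreg, hzc⟩
      · obtain ⟨y1, y2, y3⟩ := hzY
        rw [hmz] at y3
        rcases (show z.1 < (n : ℤ) - 1 ∨ (n : ℤ) - 1 < z.2 by
          by_contra hcon
          push_neg at hcon
          exact hreg ⟨hcon.1, by omega, y1, hcon.2⟩) with h | h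
        · exfalso
          rw [hc, hexC_out hn χ hreg] at hzc
          simp only [decide_eq_false_iff_not] at hzc
          omega
        · exact Or.inr (by omega)
    have hpH : p ∈ H := by
      rcases key p hp with h | h
      · exact h
      · exfalso
        have := hp.1.1
        omega
    have hesc := escape key (fun a b h => by rw [hexAdj_iff] at h; omega)
      (fun z hz => by have := hz.1.2.2.2; omega) cpq hpH
    have hw : ∃ w, w ∈ H ∧ Conn H p w ∧ w.2 = (n : ℤ) - 1 := by
      rcases hesc with ⟨hqH, hcq⟩ | ⟨w, hwH, hcw, hw1⟩
      · refine ⟨q, hqH, hcq, ?_⟩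
        have h1 := hqH.1.1
        have h2 := hqH.1.2.2.2
        omega
      · exact ⟨w, hwH, hcw, by omega⟩
    obtain ⟨w, hwH, hcw, hw2⟩ := hw
    obtain ⟨k, f, hf0, hfl, hfm, hfadj⟩ := conn_to_path hcw hpH
    refine ⟨k, fun i => toFin n hn (f i), ?_, ?_, ?_, ?_⟩
    · intro i
      rw [finCell_toFin hn (hfm i.castSucc).1, finCell_toFin hn (hfm i.succ).1]
      exact hexAdj_shift _ (hfadj i)
    · intro i
      have h2 := (hfm i).2
      rw [hc, hexC_in hn χ (hfm i).1] at h2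
      exact congrArg some h2
    · have h2 : ((toFin n hn (f 0)).2 : ℕ) = 0 := by
        rw [hf0, toFin_snd]; omega
      exact h2
    · have h2 : ((toFin n hn (f (Fin.last k))).2 : ℕ) = n - 1 := by
        rw [hfl, toFin_snd]; omega
      exact h2
end

section
/- If Red fulfills the standard winning condition in a coloring c, then there is an injective red ℤ-chain witnessing it, i.e., an injective f : ℤ → ℤ × ℤ that is a red ℤ-chain of c and satisfies the convergence requirement of the standard winning condition for every (a,b) ∈ ℤ × ℤ. -/
/-- A red `ℤ`-chain of the coloring `c`. -/
def IsRedChain (c : ℤ × ℤ → Option Bool) (f : ℤ → ℤ × ℤ) : Prop :=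
  ∀ n : ℤ, HexAdj (f n) (f (n + 1)) ∧ c (f n) = some true

/-- A blue `ℤ`-chain of the coloring `c`. -/
def IsBlueChain (c : ℤ × ℤ → Option Bool) (f : ℤ → ℤ × ℤ) : Prop :=
  ∀ n : ℤ, HexAdj (f n) (f (n + 1)) ∧ c (f n) = some false

/-- The convergence requirement for a winning red chain: for every `(a,b)` the positive
end eventually has both coordinates `> a`, `> b`, and the negative end `< a`, `< b`. -/
def RedConverges (f : ℤ → ℤ × ℤ) : Prop :=
  ∀ a b : ℤ, ∃ N : ℕ, ∀ n : ℕ, N ≤ n →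
    a < (f n).1 ∧ b < (f n).2 ∧ (f (-(n : ℤ))).1 < a ∧ (f (-(n : ℤ))).2 < b

/-- The convergence requirement for a winning blue chain. -/
def BlueConverges (f : ℤ → ℤ × ℤ) : Prop :=
  ∀ a b : ℤ, ∃ N : ℕ, ∀ n : ℕ, N ≤ n →
    (f n).1 < a ∧ b < (f n).2 ∧ a < (f (-(n : ℤ))).1 ∧ (f (-(n : ℤ))).2 < b

/-- Red fulfills the standard winning condition in the coloring `c`. -/
def RedWinsStd (c : ℤ × ℤ → Option Bool) : Prop :=
  ∃ f : ℤ → ℤ × ℤ, IsRedChain c f ∧ RedConverges f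

/-- Blue fulfills the standard winning condition in the coloring `c`. -/
def BlueWinsStd (c : ℤ × ℤ → Option Bool) : Prop :=
  ∃ f : ℤ → ℤ × ℤ, IsBlueChain c f ∧ BlueConverges f

/-- If Red fulfills the standard winning condition in `c`, then there is an injective
red `ℤ`-chain witnessing it. -/
theorem infinite_hex_injective_winning_chain (c : ℤ × ℤ → Option Bool)
    (h : RedWinsStd c) :
    ∃ f : ℤ → ℤ × ℤ, Function.Injective f ∧ IsRedChain c f ∧ RedConverges f := by
  classical
  obtain ⟨f, hchain, hconv⟩ := h
  have hadj : ∀ n : ℤ, HexAdj (f n) (f (n + 1)) := fun n => (hchain n).1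
  have hred : ∀ n : ℤ, c (f n) = some true := fun n => (hchain n).2
  -- visits to any point are bounded above and below
  have hbddAbove : ∀ t : ℤ, ∃ b : ℤ, ∀ z : ℤ, f z = f t → z ≤ b := by
    intro t
    obtain ⟨N, hN⟩ := hconv (f t).1 (f t).2
    refine ⟨N, fun z hz => ?_⟩
    by_contra hlt
    push_neg at hlt
    have h0 : (z.toNat : ℤ) = z := Int.toNat_of_nonneg (by omega)
    have := (hN z.toNat (by omega)).1
    rw [h0, hz] at this
    omega
  have hbddBelow : ∀ t : ℤ, ∃ b : ℤ, ∀ z : ℤ, f z = f t → b ≤ z := by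
    intro t
    obtain ⟨N, hN⟩ := hconv (f t).1 (f t).2
    refine ⟨-(N : ℤ), fun z hz => ?_⟩
    by_contra hlt
    push_neg at hlt
    have h0 : -(((-z).toNat : ℤ)) = z := by omega
    have := (hN (-z).toNat (by omega)).2.2.1
    rw [h0, hz] at this
    omega
  -- last-visit and first-visit functions
  let L : ℤ → ℤ := fun t => (Int.exists_greatest_of_bdd (hbddAbove t) ⟨t, rfl⟩).choose
  have hL : ∀ t, f (L t) = f t ∧ ∀ z, f z = f t → z ≤ L t := fun t =>
    (Int.exists_greatest_of_bdd (hbddAbove t) ⟨t, rfl⟩).choose_spec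
  let Fv : ℤ → ℤ := fun t => (Int.exists_least_of_bdd (hbddBelow t) ⟨t, rfl⟩).choose
  have hF : ∀ t, f (Fv t) = f t ∧ ∀ z, f z = f t → Fv t ≤ z := fun t =>
    (Int.exists_least_of_bdd (hbddBelow t) ⟨t, rfl⟩).choose_spec
  -- forward loop-erased indices
  let σ : ℕ → ℤ := fun i => Nat.rec (L 0) (fun _ s => L (s + 1)) i
  have hσ0 : σ 0 = L 0 := rfl
  have hσs : ∀ i, σ (i + 1) = L (σ i + 1) := fun _ => rfl
  have hσmax : ∀ i, ∀ z, f z = f (σ i) → z ≤ σ i := by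
    intro i z hz
    cases i with
    | zero => rw [hσ0] at hz ⊢; exact (hL 0).2 z (by rw [hz, (hL 0).1])
    | succ i => rw [hσs i] at hz ⊢; exact (hL (σ i + 1)).2 z (by rw [hz, (hL _).1])
  have hσsucc : ∀ i, σ i + 1 ≤ σ (i + 1) := by
    intro i; rw [hσs i]; exact (hL (σ i + 1)).2 _ rfl
  have hσge : ∀ i : ℕ, (i : ℤ) ≤ σ i := by
    intro i
    induction i with
    | zero => rw [hσ0]; exact (hL 0).2 0 rfl
    | succ i ih => have := hσsucc i; push_cast; omega
  have hσmono : ∀ i j : ℕ, i < j → σ i < σ j := by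
    have : StrictMono σ := strictMono_nat_of_lt_succ (fun n => by have := hσsucc n; omega)
    exact fun i j hij => this hij
  have hfσs : ∀ i, f (σ (i + 1)) = f (σ i + 1) := by
    intro i; rw [hσs i]; exact (hL _).1
  have hadjσ : ∀ i, HexAdj (f (σ i)) (f (σ (i + 1))) := by
    intro i; rw [hfσs i]; exact hadj (σ i)
  have hinjσ : ∀ i j : ℕ, f (σ i) = f (σ j) → i = j := by
    intro i j hij
    rcases lt_trichotomy i j with hlt | heq | hlt
    · exact absurd (hσmax i (σ j) hij.symm) (by have := hσmono i j hlt; omega)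
    · exact heq
    · exact absurd (hσmax j (σ i) hij) (by have := hσmono j i hlt; omega)
  -- backward loop-erased indices
  let τ : ℕ → ℤ := fun j => Nat.rec (Fv 0) (fun _ s => Fv (s - 1)) j
  have hτ0 : τ 0 = Fv 0 := rfl
  have hτs : ∀ j, τ (j + 1) = Fv (τ j - 1) := fun _ => rfl
  have hτmin : ∀ j, ∀ z, f z = f (τ j) → τ j ≤ z := by
    intro j z hz
    cases j with
    | zero => rw [hτ0] at hz ⊢; exact (hF 0).2 z (by rw [hz, (hF 0).1])
    | succ j => rw [hτs j] at hz ⊢; exact (hF (τ j - 1)).2 z (by rw [hz, (hF _).1])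
  have hτsucc : ∀ j, τ (j + 1) ≤ τ j - 1 := by
    intro j; rw [hτs j]; exact (hF (τ j - 1)).2 _ rfl
  have hτle : ∀ j : ℕ, τ j ≤ -(j : ℤ) := by
    intro j
    induction j with
    | zero => rw [hτ0]; simpa using (hF 0).2 0 rfl
    | succ j ih => have := hτsucc j; push_cast; omega
  have hτmono : ∀ i j : ℕ, i < j → τ j < τ i := by
    have : StrictAnti τ := strictAnti_nat_of_succ_lt (fun n => by have := hτsucc n; omega)
    exact fun i j hij => this hij
  have hfτs : ∀ j, f (τ (j + 1)) = f (τ j - 1) := by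
    intro j; rw [hτs j]; exact (hF _).1
  have hadjτ : ∀ j, HexAdj (f (τ (j + 1))) (f (τ j)) := by
    intro j
    rw [hfτs j]
    have := hadj (τ j - 1)
    simpa using this
  have hinjτ : ∀ i j : ℕ, f (τ i) = f (τ j) → i = j := by
    intro i j hij
    rcases lt_trichotomy i j with hlt | heq | hlt
    · exact absurd (hτmin i (τ j) hij.symm) (by have := hτmono i j hlt; omega)
    · exact heq
    · exact absurd (hτmin j (τ i) hij) (by have := hτmono j i hlt; omega)
  have hσ0f : f (σ 0) = f 0 := by rw [hσ0]; exact (hL 0).1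
  have hτ0f : f (τ 0) = f 0 := by rw [hτ0]; exact (hF 0).1
  -- the collision set is finite
  obtain ⟨N₁, hN₁⟩ := hconv 0 0
  set D : Set (ℤ × ℤ) := f '' (Set.Icc (-(N₁ : ℤ)) (N₁ : ℤ)) with hD
  have hDfin : D.Finite := (Set.finite_Icc _ _).image f
  set C : Set ℕ := {i : ℕ | ∃ j : ℕ, f (σ i) = f (τ j)} with hC
  have hCsub : C ⊆ (fun i => f (σ i)) ⁻¹' D := by
    intro i hi
    obtain ⟨j, hj⟩ := hi
    rcases le_or_gt (σ i) (N₁ : ℤ) with hcase | hcase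
    · exact ⟨σ i, ⟨by have := hσge i; omega, hcase⟩, rfl⟩
    · refine ⟨τ j, ⟨?_, by have := hτle j; omega⟩, hj.symm⟩
      by_contra hτlt
      push_neg at hτlt
      have h1 : ((σ i).toNat : ℤ) = σ i := Int.toNat_of_nonneg (by have := hσge i; omega)
      have h2 : (0:ℤ) < (f ((σ i).toNat : ℤ)).1 := (hN₁ (σ i).toNat (by omega)).1
      rw [h1] at h2
      have h3 : -((((-(τ j)).toNat) : ℤ)) = τ j := by omega
      have h4 : (f (-(((-(τ j)).toNat : ℕ) : ℤ))).1 < 0 := (hN₁ (-(τ j)).toNat (by omega)).2.2.1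
      rw [h3, ← hj] at h4
      omega
  have hCfin : C.Finite := by
    refine Set.Finite.subset (Set.Finite.preimage ?_ hDfin) hCsub
    intro i _ j _ hij
    exact hinjσ i j hij
  have hC0 : (0 : ℕ) ∈ C := ⟨0, by rw [hσ0f, hτ0f]⟩
  obtain ⟨istar, histar, hmax⟩ : ∃ a ∈ C, ∀ a' ∈ C, id a ≤ id a' → id a = id a' := by
    obtain ⟨i, hi, hm⟩ := Set.Finite.exists_maximalFor id C hCfin ⟨0, hC0⟩
    exact ⟨i, hi, fun a' ha' hle => le_antisymm hle (hm ha' hle)⟩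
  obtain ⟨jstar, hjstar⟩ := histar
  -- the final chain
  set F : ℤ → ℤ × ℤ := fun n =>
    if 0 ≤ n then f (σ (istar + n.toNat)) else f (τ (jstar + (-n).toNat)) with hFdef
  have hFpos : ∀ n : ℤ, 0 ≤ n → F n = f (σ (istar + n.toNat)) := by
    intro n hn; simp only [hFdef, if_pos hn]
  have hFneg : ∀ n : ℤ, n < 0 → F n = f (τ (jstar + (-n).toNat)) := by
    intro n hn; simp only [hFdef, if_neg (by omega : ¬ 0 ≤ n)]
  refine ⟨F, ?_, ?_, ?_⟩
  · -- injectivity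
    intro m m' hmm
    by_cases hm : 0 ≤ m <;> by_cases hm' : 0 ≤ m'
    · rw [hFpos m hm, hFpos m' hm'] at hmm
      have := hinjσ _ _ hmm
      omega
    · rw [hFpos m hm, hFneg m' (by omega)] at hmm
      have hiC : istar + m.toNat ∈ C := ⟨jstar + (-m').toNat, hmm⟩
      have h1 : istar = istar + m.toNat := hmax _ hiC (by simp)
      have hm0 : m = 0 := by omega
      rw [hm0] at hmm
      simp only [Int.toNat_zero, Nat.add_zero] at hmm
      have := hinjτ _ _ (hjstar.symm.trans hmm).symm
      omega
    · rw [hFneg m (by omega), hFpos m' hm'] at hmm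
      have hiC : istar + m'.toNat ∈ C := ⟨jstar + (-m).toNat, hmm.symm⟩
      have h1 : istar = istar + m'.toNat := hmax _ hiC (by simp)
      have hm0 : m' = 0 := by omega
      rw [hm0] at hmm
      simp only [Int.toNat_zero, Nat.add_zero] at hmm
      have := hinjτ _ _ (hjstar.symm.trans hmm.symm).symm
      omega
    · rw [hFneg m (by omega), hFneg m' (by omega)] at hmm
      have := hinjτ _ _ hmm
      omega
  · -- chain property
    intro n
    constructor
    · rcases lt_trichotomy n (-1) with hn | hn | hn
      · rw [hFneg n (by omega), hFneg (n+1) (by omega)]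
        have he : jstar + (-n).toNat = (jstar + (-(n+1)).toNat) + 1 := by omega
        rw [he]
        exact hadjτ (jstar + (-(n+1)).toNat)
      · rw [hn]
        rw [hFneg (-1) (by omega), (by norm_num : (-1 : ℤ) + 1 = 0), hFpos 0 le_rfl]
        simp only [Int.toNat_zero, Nat.add_zero, Int.toNat_one]
        rw [hjstar]
        exact hadjτ jstar
      · rw [hFpos n (by omega), hFpos (n+1) (by omega)]
        have he : istar + (n+1).toNat = (istar + n.toNat) + 1 := by omega
        rw [he]
        exact hadjσ (istar + n.toNat)
    · by_cases hn : 0 ≤ n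
      · rw [hFpos n hn]; exact hred _
      · rw [hFneg n (by omega)]; exact hred _
  · -- convergence
    intro a b
    obtain ⟨N, hN⟩ := hconv a b
    refine ⟨N + 1, fun n hn => ?_⟩
    have hfwd : F (n : ℤ) = f (σ (istar + n)) := by
      rw [hFpos (n : ℤ) (by positivity)]; norm_num
    have hbwd : F (-(n : ℤ)) = f (τ (jstar + n)) := by
      rw [hFneg (-(n : ℤ)) (by omega)]
      norm_num
    constructor
    · -- forward first coordinate
      have hσn := hσge (istar + n)
      set m := (σ (istar + n)).toNat with hm
      have hmz : (m : ℤ) = σ (istar + n) := Int.toNat_of_nonneg (by push_cast at hσn; omega)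
      have := (hN m (by push_cast at hσn ⊢; omega)).1
      rw [hmz] at this
      rw [hfwd]; exact this
    refine ⟨?_, ?_, ?_⟩
    · have hσn := hσge (istar + n)
      set m := (σ (istar + n)).toNat with hm
      have hmz : (m : ℤ) = σ (istar + n) := Int.toNat_of_nonneg (by push_cast at hσn; omega)
      have := (hN m (by push_cast at hσn ⊢; omega)).2.1
      rw [hmz] at this
      rw [hfwd]; exact this
    · have hτn := hτle (jstar + n)
      set m := (-(τ (jstar + n))).toNat with hm
      have hmz : -(m : ℤ) = τ (jstar + n) := by push_cast at hτn ⊢; omega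
      have := (hN m (by push_cast at hτn ⊢; omega)).2.2.1
      rw [hmz] at this
      rw [hbwd]; exact this
    · have hτn := hτle (jstar + n)
      set m := (-(τ (jstar + n))).toNat with hm
      have hmz : -(m : ℤ) = τ (jstar + n) := by push_cast at hτn ⊢; omega
      have := (hN m (by push_cast at hτn ⊢; omega)).2.2.2
      rw [hmz] at this
      rw [hbwd]; exact this
end

section
/- For every coloring c of the infinite Hex board and every fixed origin (a,b) ∈ ℤ × ℤ, it is not the case that both Red and Blue win c with respect to the fixed origin (a,b). -/
/-- Red wins `c` with respect to the fixed origin `(a, b)`: there is an injective red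
`ℤ`-chain eventually in quadrant I on its positive end and in quadrant III on its
negative end, with respect to the origin `(a, b)`. -/
def RedWinsFixedOrigin (c : ℤ × ℤ → Option Bool) (a b : ℤ) : Prop :=
  ∃ f : ℤ → ℤ × ℤ, Function.Injective f ∧ IsRedChain c f ∧
    ∃ N : ℕ, ∀ n : ℕ, N ≤ n →
      a < (f n).1 ∧ b < (f n).2 ∧ (f (-(n : ℤ))).1 < a ∧ (f (-(n : ℤ))).2 < b

/-- Blue wins `c` with respect to the fixed origin `(a, b)`. -/
def BlueWinsFixedOrigin (c : ℤ × ℤ → Option Bool) (a b : ℤ) : Prop :=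
  ∃ f : ℤ → ℤ × ℤ, Function.Injective f ∧ IsBlueChain c f ∧
    ∃ N : ℕ, ∀ n : ℕ, N ≤ n →
      (f n).1 < a ∧ b < (f n).2 ∧ a < (f (-(n : ℤ))).1 ∧ (f (-(n : ℤ))).2 < b


/- ======================= auxiliary development ======================= -/

namespace InfHexAux

open Finset


def ww (p : ℤ × ℤ) : ℤ := p.1 + p.2

def Strad (A B q : ℤ × ℤ) : Prop :=
  (ww A ≤ ww q ∧ ww q < ww B) ∨ (ww B ≤ ww q ∧ ww q < ww A)

def Cross (A B q : ℤ × ℤ) : Prop :=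
  Strad A B q ∧
    ((A.1 + ww q ≤ q.1 + ww A ∧ A.1 + ww q ≤ q.1 + ww B) ∨
     (B.1 + ww q ≤ q.1 + ww A ∧ B.1 + ww q ≤ q.1 + ww B))

def Dm (q q' X : ℤ × ℤ) : Prop :=
  (ww q < ww X ∧ ww X ≤ ww q' ∧ X.1 + ww q ≤ q.1 + ww X - 1) ∨
  (ww q' < ww X ∧ ww X ≤ ww q ∧ X.1 + ww q' ≤ q'.1 + ww X - 1)

lemma cross_comm {A B q : ℤ × ℤ} : Cross A B q ↔ Cross B A q := by
  unfold Cross Strad; tauto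

lemma dm_comm {q q' X : ℤ × ℤ} : Dm q q' X ↔ Dm q' q X := by
  unfold Dm; tauto

lemma hexAdj_bounds {p r : ℤ × ℤ} (h : HexAdj p r) :
    r.1 - p.1 ≤ 1 ∧ p.1 - r.1 ≤ 1 ∧ (r.1 + r.2) - (p.1 + p.2) ≤ 2 ∧
      (p.1 + p.2) - (r.1 + r.2) ≤ 2 ∧ (r.1 + r.2) ≠ (p.1 + p.2) := by
  simp only [HexAdj, Set.mem_insert_iff, Set.mem_singleton_iff, Prod.ext_iff, Prod.fst_sub,
    Prod.snd_sub] at h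
  omega

lemma hexAdj_split {p q : ℤ × ℤ} (h : HexAdj p q) :
    (q = p + (1, 0) ∨ q = p + (0, 1) ∨ q = p + (1, 1)) ∨
    (p = q + (1, 0) ∨ p = q + (0, 1) ∨ p = q + (1, 1)) := by
  simp only [HexAdj, Set.mem_insert_iff, Set.mem_singleton_iff, Prod.ext_iff, Prod.fst_sub,
    Prod.snd_sub] at h
  simp only [Prod.ext_iff, Prod.fst_add, Prod.snd_add]
  omega

set_option maxHeartbeats 1600000 in
lemma key_core (q A d e : ℤ × ℤ)
    (hd : d = (1, 0) ∨ d = (0, 1) ∨ d = (1, 1))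
    (he : e = (1, 0) ∨ e = (0, 1) ∨ e = (1, 1))
    (h1 : A ≠ q) (h2 : A ≠ q + d) (h3 : A + e ≠ q) (h4 : A + e ≠ q + d) :
    (Cross A (A + e) q ↔ Cross A (A + e) (q + d)) ↔
      (Dm q (q + d) A ↔ Dm q (q + d) (A + e)) := by
  rw [Ne, Prod.ext_iff] at h1 h2 h3 h4
  unfold Cross Strad Dm ww
  rcases hd with rfl | rfl | rfl <;> rcases he with rfl | rfl | rfl <;>
    simp only [Prod.fst_add, Prod.snd_add] at h1 h2 h3 h4 ⊢ <;>
    omega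

lemma key {q q' A B : ℤ × ℤ} (hq : HexAdj q q') (hAB : HexAdj A B)
    (h1 : A ≠ q) (h2 : A ≠ q') (h3 : B ≠ q) (h4 : B ≠ q') :
    (Cross A B q ↔ Cross A B q') ↔ (Dm q q' A ↔ Dm q q' B) := by
  have hds := hexAdj_split hq
  have hes := hexAdj_split hAB
  rcases hds with hd | hd
  · rcases hes with he | he
    · obtain ⟨d, hd', rfl⟩ : ∃ x, (x = (1,0) ∨ x = (0,1) ∨ x = (1,1)) ∧ q' = q + x := by
        rcases hd with h | h | h
        exacts [⟨_, Or.inl rfl, h⟩, ⟨_, Or.inr (Or.inl rfl), h⟩, ⟨_, Or.inr (Or.inr rfl), h⟩]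
      obtain ⟨e, he', rfl⟩ : ∃ x, (x = (1,0) ∨ x = (0,1) ∨ x = (1,1)) ∧ B = A + x := by
        rcases he with h | h | h
        exacts [⟨_, Or.inl rfl, h⟩, ⟨_, Or.inr (Or.inl rfl), h⟩, ⟨_, Or.inr (Or.inr rfl), h⟩]
      exact key_core q A d e hd' he' h1 h2 h3 h4
    · obtain ⟨e, he', rfl⟩ : ∃ x, (x = (1,0) ∨ x = (0,1) ∨ x = (1,1)) ∧ A = B + x := by
        rcases he with h | h | h
        exacts [⟨_, Or.inl rfl, h⟩, ⟨_, Or.inr (Or.inl rfl), h⟩, ⟨_, Or.inr (Or.inr rfl), h⟩]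
      obtain ⟨d, hd', rfl⟩ : ∃ x, (x = (1,0) ∨ x = (0,1) ∨ x = (1,1)) ∧ q' = q + x := by
        rcases hd with h | h | h
        exacts [⟨_, Or.inl rfl, h⟩, ⟨_, Or.inr (Or.inl rfl), h⟩, ⟨_, Or.inr (Or.inr rfl), h⟩]
      have hc := key_core q B d e hd' he' h3 h4 h1 h2
      have c1 : Cross B (B + e) q ↔ Cross (B + e) B q := cross_comm
      have c2 : Cross B (B + e) (q + d) ↔ Cross (B + e) B (q + d) := cross_comm
      rw [← c1, ← c2]
      exact hc.trans Iff.comm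
  · rcases hes with he | he
    · obtain ⟨e, he', rfl⟩ : ∃ x, (x = (1,0) ∨ x = (0,1) ∨ x = (1,1)) ∧ B = A + x := by
        rcases he with h | h | h
        exacts [⟨_, Or.inl rfl, h⟩, ⟨_, Or.inr (Or.inl rfl), h⟩, ⟨_, Or.inr (Or.inr rfl), h⟩]
      obtain ⟨d, hd', rfl⟩ : ∃ x, (x = (1,0) ∨ x = (0,1) ∨ x = (1,1)) ∧ q = q' + x := by
        rcases hd with h | h | h
        exacts [⟨_, Or.inl rfl, h⟩, ⟨_, Or.inr (Or.inl rfl), h⟩, ⟨_, Or.inr (Or.inr rfl), h⟩]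
      have hc := key_core q' A d e hd' he' h2 h1 h4 h3
      have c1 : Dm q' (q' + d) A ↔ Dm (q' + d) q' A := dm_comm
      have c2 : Dm q' (q' + d) (A + e) ↔ Dm (q' + d) q' (A + e) := dm_comm
      rw [← c1, ← c2]
      exact Iff.comm.trans hc
    · obtain ⟨e, he', rfl⟩ : ∃ x, (x = (1,0) ∨ x = (0,1) ∨ x = (1,1)) ∧ A = B + x := by
        rcases he with h | h | h
        exacts [⟨_, Or.inl rfl, h⟩, ⟨_, Or.inr (Or.inl rfl), h⟩, ⟨_, Or.inr (Or.inr rfl), h⟩]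
      obtain ⟨d, hd', rfl⟩ : ∃ x, (x = (1,0) ∨ x = (0,1) ∨ x = (1,1)) ∧ q = q' + x := by
        rcases hd with h | h | h
        exacts [⟨_, Or.inl rfl, h⟩, ⟨_, Or.inr (Or.inl rfl), h⟩, ⟨_, Or.inr (Or.inr rfl), h⟩]
      have hc := key_core q' B d e hd' he' h4 h3 h2 h1
      have c1 : Cross B (B + e) q' ↔ Cross (B + e) B q' := cross_comm
      have c2 : Cross B (B + e) (q' + d) ↔ Cross (B + e) B (q' + d) := cross_comm
      have c3 : Dm q' (q' + d) B ↔ Dm (q' + d) q' B := dm_comm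
      have c4 : Dm q' (q' + d) (B + e) ↔ Dm (q' + d) q' (B + e) := dm_comm
      rw [← c1, ← c2, ← c3, ← c4]
      exact Iff.comm.trans (hc.trans Iff.comm)


open scoped Classical in
/-- Indicator of a proposition with values in `ZMod 2`. -/
noncomputable def ind (P : Prop) : ZMod 2 := if P then 1 else 0

lemma ind_true {P : Prop} (h : P) : ind P = 1 := by
  unfold ind; rw [if_pos h]

lemma ind_false {P : Prop} (h : ¬ P) : ind P = 0 := by
  unfold ind; rw [if_neg h]

lemma ind_congr {P Q : Prop} (h : P ↔ Q) : ind P = ind Q := by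
  by_cases hP : P
  · rw [ind_true hP, ind_true (h.mp hP)]
  · rw [ind_false hP, ind_false (fun hq => hP (h.mpr hq))]

lemma ind_sub_eq {P Q R T : Prop} (h : (P ↔ Q) ↔ (R ↔ T)) :
    ind P - ind Q = ind T - ind R := by
  by_cases hP : P <;> by_cases hQ : Q <;> by_cases hR : R <;> by_cases hT : T <;>
    simp_all [ind_true, ind_false] <;> decide

lemma ind_not_iff {R T : Prop} : ind (¬ (R ↔ T)) = ind T - ind R := by
  by_cases hR : R <;> by_cases hT : T <;>
    simp_all [ind_true, ind_false] <;> decide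

lemma ind_strad (A B q : ℤ × ℤ) :
    ind (Strad A B q) = ind (ww q < ww B) - ind (ww q < ww A) := by
  rw [ind_congr (show Strad A B q ↔ ¬ ((ww q < ww A) ↔ (ww q < ww B)) by
    unfold Strad; omega)]
  exact ind_not_iff

/-- telescoping sums over integer intervals -/
lemma tele (h : ℤ → ZMod 2) (L : ℤ) :
    ∀ R : ℤ, L ≤ R → (∑ n ∈ Finset.Ico L R, (h (n + 1) - h n)) = h R - h L := by
  refine Int.le_induction ?_ ?_
  · simp
  · intro R hLR ih
    have hins : Finset.Ico L (R + 1) = insert R (Finset.Ico L R) := by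
      ext x; simp only [Finset.mem_Ico, Finset.mem_insert]; omega
    rw [hins, Finset.sum_insert (by simp), ih]
    ring

lemma ico_split (L m R : ℤ) (h1 : L ≤ m) (h2 : m ≤ R) (h : ℤ → ZMod 2) :
    (∑ n ∈ Finset.Ico L R, h n) =
      (∑ n ∈ Finset.Ico L m, h n) + ∑ n ∈ Finset.Ico m R, h n := by
  rw [← Finset.sum_union]
  · congr 1
    ext x; simp only [Finset.mem_union, Finset.mem_Ico]; omega
  · rw [Finset.disjoint_left]
    intro x hx1 hx2
    simp only [Finset.mem_Ico] at hx1 hx2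
    omega

/-- crossing-parity of the chain `f` over the window `[-M, M]` w.r.t. basepoint `q`. -/
noncomputable def SS (f : ℤ → ℤ × ℤ) (M : ℕ) (q : ℤ × ℤ) : ZMod 2 :=
  ∑ n ∈ Finset.Ico (-(M : ℤ)) (M : ℤ), ind (Cross (f n) (f (n + 1)) q)

/-- An injective sequence of ℕ cannot stay in a finite box. -/
lemma no_inj_box (φ : ℕ → ℤ × ℤ) (hinj : Function.Injective φ) (lo hi : ℤ × ℤ)
    (hmem : ∀ i, φ i ∈ Set.Icc lo hi) : False :=
  (Set.finite_Icc lo hi).not_infinite (Set.infinite_of_injective_forall_mem hinj hmem)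

section Chains

variable {c : ℤ × ℤ → Option Bool} {a b : ℤ} {f g : ℤ → ℤ × ℤ} {Nf Ng : ℕ}

/-- tail hypothesis of a winning red chain -/
def RTail (f : ℤ → ℤ × ℤ) (a b : ℤ) (Nf : ℕ) : Prop :=
  ∀ n : ℕ, Nf ≤ n →
    a < (f n).1 ∧ b < (f n).2 ∧ (f (-(n : ℤ))).1 < a ∧ (f (-(n : ℤ))).2 < b

/-- tail hypothesis of a winning blue chain -/
def BTail (g : ℤ → ℤ × ℤ) (a b : ℤ) (Ng : ℕ) : Prop :=
  ∀ n : ℕ, Ng ≤ n →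
    (g n).1 < a ∧ b < (g n).2 ∧ a < (g (-(n : ℤ))).1 ∧ (g (-(n : ℤ))).2 < b

lemma tailI (ht : RTail f a b Nf) {n : ℤ} (hn : (Nf : ℤ) ≤ n) :
    a < (f n).1 ∧ b < (f n).2 := by
  have h := ht n.toNat (by omega)
  rw [Int.toNat_of_nonneg (by omega)] at h
  exact ⟨h.1, h.2.1⟩

lemma tailIII (ht : RTail f a b Nf) {n : ℤ} (hn : n ≤ -(Nf : ℤ)) :
    (f n).1 < a ∧ (f n).2 < b := by
  have h := ht (-n).toNat (by omega)
  rw [Int.toNat_of_nonneg (by omega), neg_neg] at h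
  exact ⟨h.2.2.1, h.2.2.2⟩

/-- Eventually the anti-diagonal level on the positive end is above any bound, and on
the negative end below any bound. -/
lemma wfar (hfinj : Function.Injective f) (ht : RTail f a b Nf) (C : ℤ) :
    ∃ M0 : ℕ, Nf ≤ M0 ∧ ∀ M : ℕ, M0 ≤ M →
      C < ww (f (M : ℤ)) ∧ ww (f (-(M : ℤ))) < -C := by
  have hinj1 : Function.Injective (fun n : ℕ => f (n : ℤ)) :=
    hfinj.comp (fun x y h => by exact_mod_cast h)
  have hinj2 : Function.Injective (fun n : ℕ => f (-(n : ℤ))) :=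
    hfinj.comp (fun x y h => by
      have h2 : -(x : ℤ) = -(y : ℤ) := h
      exact_mod_cast (neg_inj.mp h2))
  have h1 : {n : ℕ | Nf ≤ n ∧ ww (f (n : ℤ)) ≤ C}.Finite := by
    apply Set.Finite.subset
      ((Set.finite_Icc ((a + 1, b + 1) : ℤ × ℤ) (C - b - 1, C - a - 1)).preimage
        hinj1.injOn)
    rintro n ⟨hn, hw⟩
    obtain ⟨t1, t2⟩ := tailI ht (n := (n : ℤ)) (by omega)
    simp only [Set.mem_preimage, Set.mem_Icc, Prod.le_def]
    unfold ww at hw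
    omega
  have h2 : {n : ℕ | Nf ≤ n ∧ -C ≤ ww (f (-(n : ℤ)))}.Finite := by
    apply Set.Finite.subset
      ((Set.finite_Icc ((-C - b + 1, -C - a + 1) : ℤ × ℤ) (a - 1, b - 1)).preimage
        hinj2.injOn)
    rintro n ⟨hn, hw⟩
    obtain ⟨t1, t2⟩ := tailIII ht (n := -(n : ℤ)) (by omega)
    simp only [Set.mem_preimage, Set.mem_Icc, Prod.le_def]
    unfold ww at hw
    omega
  obtain ⟨B1, hB1⟩ := h1.bddAbove
  obtain ⟨B2, hB2⟩ := h2.bddAbove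
  refine ⟨max Nf (max B1 B2) + 1, by omega, fun M hM => ?_⟩
  constructor
  · by_contra hcon
    have hMm : M ∈ {n : ℕ | Nf ≤ n ∧ ww (f (n : ℤ)) ≤ C} := ⟨by omega, by omega⟩
    have := hB1 hMm
    omega
  · by_contra hcon
    have hMm : M ∈ {n : ℕ | Nf ≤ n ∧ -C ≤ ww (f (-(n : ℤ)))} := ⟨by omega, by omega⟩
    have := hB2 hMm
    omega

/-- The one-step invariance: the crossing parity is the same for adjacent non-red
basepoints, for large enough windows. -/
lemma step (hfinj : Function.Injective f) (hfc : IsRedChain c f) (ht : RTail f a b Nf)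
    {q q' : ℤ × ℤ} (hadj : HexAdj q q') (hq : c q = some false) (hq' : c q' = some false) :
    ∃ M0 : ℕ, ∀ M : ℕ, M0 ≤ M → SS f M q = SS f M q' := by
  obtain ⟨M0, hM0Nf, hM0⟩ := wfar hfinj ht (max (ww q + 2) (2 - ww q))
  refine ⟨M0, fun M hM => ?_⟩
  have hne : ∀ n : ℤ, f n ≠ q ∧ f n ≠ q' := by
    intro n
    constructor
    · intro hcon
      have hcol := (hfc n).2
      rw [hcon, hq] at hcol
      simp at hcol
    · intro hcon
      have hcol := (hfc n).2
      rw [hcon, hq'] at hcol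
      simp at hcol
  have hsub : SS f M q - SS f M q' =
      ∑ n ∈ Finset.Ico (-(M : ℤ)) (M : ℤ),
        ((fun n => ind (Dm q q' (f n))) (n + 1) - (fun n => ind (Dm q q' (f n))) n) := by
    rw [SS, SS, ← Finset.sum_sub_distrib]
    refine Finset.sum_congr rfl (fun n _ => ?_)
    exact ind_sub_eq (key hadj (hfc n).1 (hne n).1 (hne n).2 (hne (n + 1)).1 (hne (n + 1)).2)
  rw [tele (fun n => ind (Dm q q' (f n))) _ _ (by omega)] at hsub
  obtain ⟨htop, hbot⟩ := hM0 M hM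
  have hq'w : ww q' ≤ ww q + 2 ∧ ww q - 2 ≤ ww q' := by
    have hsp := hexAdj_split hadj
    rcases hsp with (rfl | rfl | rfl) | (h | h | h) <;>
      [skip; skip; skip; rw [h]; rw [h]; rw [h]] <;>
      unfold ww <;> simp [Prod.fst_add, Prod.snd_add] <;> omega
  have h1 : ¬ Dm q q' (f (M : ℤ)) := by unfold Dm; omega
  have h2 : ¬ Dm q q' (f (-(M : ℤ))) := by unfold Dm; omega
  rw [ind_false h1, ind_false h2] at hsub
  have hzero : SS f M q - SS f M q' = 0 := by rw [hsub]; ring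
  linear_combination hzero

/-- Endpoint evaluation in quadrant IV : the crossing parity is `1`. -/
lemma endIV (hfinj : Function.Injective f) (hfc : IsRedChain c f) (ht : RTail f a b Nf)
    (hginj : Function.Injective g) (hgt : BTail g a b Ng) :
    ∃ m : ℕ, Ng ≤ m ∧ ∃ M0 : ℕ, Nf ≤ M0 ∧ ∀ M : ℕ, M0 ≤ M →
      SS f M (g (-(m : ℤ))) = 1 := by
  classical
  set Kf : Finset (ℤ × ℤ) := (Finset.Icc (-(Nf : ℤ)) (Nf : ℤ)).image f with hKf
  have hKne : Kf.Nonempty := ⟨f 0, Finset.mem_image.mpr ⟨0, by simp, rfl⟩⟩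
  have hKmem : ∀ n : ℤ, -(Nf : ℤ) ≤ n → n ≤ (Nf : ℤ) → f n ∈ Kf := fun n hn1 hn2 =>
    Finset.mem_image.mpr ⟨n, Finset.mem_Icc.mpr ⟨hn1, hn2⟩, rfl⟩
  obtain ⟨mx, hmx⟩ : ∃ mx : ℤ, ∀ X ∈ Kf, X.1 ≤ mx :=
    ⟨(Kf.image Prod.fst).max' (hKne.image _), fun X hX =>
      Finset.le_max' _ _ (Finset.mem_image_of_mem _ hX)⟩
  obtain ⟨mw, hmw⟩ : ∃ mw : ℤ, ∀ X ∈ Kf, mw ≤ ww X :=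
    ⟨(Kf.image ww).min' (hKne.image _), fun X hX =>
      Finset.min'_le _ _ (Finset.mem_image_of_mem _ hX)⟩
  have dich : (∃ m : ℕ, Ng ≤ m ∧ mx < (g (-(m : ℤ))).1) ∨
      (∃ m : ℕ, Ng ≤ m ∧ ww (g (-(m : ℤ))) < min mw (a + b + 2)) := by
    by_contra hcon
    push_neg at hcon
    obtain ⟨hc1, hc2⟩ := hcon
    refine no_inj_box (fun i : ℕ => g (-((Ng + i : ℕ) : ℤ))) (hginj.comp ?_)
      (a + 1, min mw (a + b + 2) - mx) (mx, b - 1) ?_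
    · intro x y hxy
      have hxy' : -((Ng + x : ℕ) : ℤ) = -((Ng + y : ℕ) : ℤ) := hxy
      omega
    · intro i
      have h1 := hc1 (Ng + i) (by omega)
      have h2 := hc2 (Ng + i) (by omega)
      have h3 := (hgt (Ng + i) (by omega)).2.2
      simp only [Set.mem_Icc, Prod.le_def]
      unfold ww at h2
      omega
  rcases dich with ⟨m, hm, hx⟩ | ⟨m, hm, hw⟩
  · -- the blue negative tail reaches far to the right
    obtain ⟨hqa, hqb⟩ := (hgt m hm).2.2
    obtain ⟨M0, hM0Nf, hM0⟩ := wfar hfinj ht (max (ww (g (-(m : ℤ)))) (-(ww (g (-(m : ℤ)))) - 1))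
    refine ⟨m, hm, M0, hM0Nf, fun M hM => ?_⟩
    set q := g (-(m : ℤ)) with hq
    have per : ∀ n ∈ Finset.Ico (-(M : ℤ)) (M : ℤ),
        ind (Cross (f n) (f (n + 1)) q) =
          (fun n => ind (ww q < ww (f n))) (n + 1) - (fun n => ind (ww q < ww (f n))) n := by
      intro n _
      simp only
      rw [← ind_strad]
      refine ind_congr ⟨And.left, fun hs => ⟨hs, ?_⟩⟩
      by_cases hn1 : (Nf : ℤ) ≤ n
      · have t1 := tailI ht (n := n) hn1
        have t2 := tailI ht (n := n + 1) (by omega)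
        have hb := hexAdj_bounds (hfc n).1
        unfold Strad at hs
        unfold ww at *
        omega
      · by_cases hn2 : n ≤ -(Nf : ℤ) - 1
        · have t1 := tailIII ht (n := n) (by omega)
          have t2 := tailIII ht (n := n + 1) (by omega)
          have hb := hexAdj_bounds (hfc n).1
          unfold Strad at hs
          unfold ww at *
          omega
        · have k1 := hmx _ (hKmem n (by omega) (by omega))
          have k2 := hmx _ (hKmem (n + 1) (by omega) (by omega))
          have hb := hexAdj_bounds (hfc n).1
          unfold Strad at hs
          unfold ww at *
          omega
    rw [SS, Finset.sum_congr rfl per,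
      tele (fun n => ind (ww q < ww (f n))) _ _ (by omega)]
    obtain ⟨htop, hbot⟩ := hM0 M hM
    rw [ind_true (show ww q < ww (f (M : ℤ)) by omega),
      ind_false (show ¬ ww q < ww (f (-(M : ℤ))) by omega)]
    decide
  · -- the blue negative tail reaches far down
    obtain ⟨hqa, hqb⟩ := (hgt m hm).2.2
    obtain ⟨M0, hM0Nf, hM0⟩ := wfar hfinj ht (max (ww (g (-(m : ℤ)))) (-(ww (g (-(m : ℤ)))) - 1))
    refine ⟨m, hm, M0, hM0Nf, fun M hM => ?_⟩
    set q := g (-(m : ℤ)) with hq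
    rw [SS, ico_split (-(M : ℤ)) (-(Nf : ℤ)) (M : ℤ) (by omega) (by omega)]
    have hzero : ∀ n ∈ Finset.Ico (-(Nf : ℤ)) (M : ℤ),
        ind (Cross (f n) (f (n + 1)) q) = 0 := by
      intro n hn
      simp only [Finset.mem_Ico] at hn
      apply ind_false
      rintro ⟨hs, -⟩
      by_cases hn1 : (Nf : ℤ) ≤ n
      · have t1 := tailI ht (n := n) hn1
        have t2 := tailI ht (n := n + 1) (by omega)
        have hb := hexAdj_bounds (hfc n).1
        unfold Strad at hs
        unfold ww at *
        omega
      · have k1 := hmw _ (hKmem n (by omega) (by omega))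
        have k2 := hmw _ (hKmem (n + 1) (by omega) (by omega))
        have hb := hexAdj_bounds (hfc n).1
        unfold Strad at hs
        unfold ww at *
        omega
    rw [Finset.sum_eq_zero hzero, add_zero]
    have per : ∀ n ∈ Finset.Ico (-(M : ℤ)) (-(Nf : ℤ)),
        ind (Cross (f n) (f (n + 1)) q) =
          (fun n => ind (ww q < ww (f n))) (n + 1) - (fun n => ind (ww q < ww (f n))) n := by
      intro n hn
      simp only [Finset.mem_Ico] at hn
      simp only
      rw [← ind_strad]
      refine ind_congr ⟨And.left, fun hs => ⟨hs, ?_⟩⟩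
      have t1 := tailIII ht (n := n) (by omega)
      have t2 := tailIII ht (n := n + 1) (by omega)
      have hb := hexAdj_bounds (hfc n).1
      unfold Strad at hs
      unfold ww at *
      omega
    rw [Finset.sum_congr rfl per,
      tele (fun n => ind (ww q < ww (f n))) _ _ (by omega)]
    have hK := hmw _ (hKmem (-(Nf : ℤ)) (by omega) (by omega))
    obtain ⟨htop, hbot⟩ := hM0 M hM
    rw [ind_true (show ww q < ww (f (-(Nf : ℤ))) by omega),
      ind_false (show ¬ ww q < ww (f (-(M : ℤ))) by omega)]
    decide

/-- Endpoint evaluation in quadrant II : the crossing parity is `0`. -/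
lemma endII (hfinj : Function.Injective f) (hfc : IsRedChain c f) (ht : RTail f a b Nf)
    (hginj : Function.Injective g) (hgt : BTail g a b Ng) :
    ∃ m : ℕ, Ng ≤ m ∧ ∀ M : ℕ, SS f M (g (m : ℤ)) = 0 := by
  classical
  set Kf : Finset (ℤ × ℤ) := (Finset.Icc (-(Nf : ℤ)) (Nf : ℤ)).image f with hKf
  have hKne : Kf.Nonempty := ⟨f 0, Finset.mem_image.mpr ⟨0, by simp, rfl⟩⟩
  have hKmem : ∀ n : ℤ, -(Nf : ℤ) ≤ n → n ≤ (Nf : ℤ) → f n ∈ Kf := fun n hn1 hn2 =>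
    Finset.mem_image.mpr ⟨n, Finset.mem_Icc.mpr ⟨hn1, hn2⟩, rfl⟩
  obtain ⟨mnx, hmnx⟩ : ∃ mnx : ℤ, ∀ X ∈ Kf, mnx ≤ X.1 :=
    ⟨(Kf.image Prod.fst).min' (hKne.image _), fun X hX =>
      Finset.min'_le _ _ (Finset.mem_image_of_mem _ hX)⟩
  obtain ⟨Mw, hMw⟩ : ∃ Mw : ℤ, ∀ X ∈ Kf, ww X ≤ Mw :=
    ⟨(Kf.image ww).max' (hKne.image _), fun X hX =>
      Finset.le_max' _ _ (Finset.mem_image_of_mem _ hX)⟩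
  have dich : (∃ m : ℕ, Ng ≤ m ∧ (g (m : ℤ)).1 < mnx) ∨
      (∃ m : ℕ, Ng ≤ m ∧ Mw < ww (g (m : ℤ))) := by
    by_contra hcon
    push_neg at hcon
    obtain ⟨hc1, hc2⟩ := hcon
    refine no_inj_box (fun i : ℕ => g ((Ng + i : ℕ) : ℤ)) (hginj.comp ?_)
      (mnx, b + 1) (a - 1, Mw - mnx) ?_
    · intro x y hxy
      have hxy' : ((Ng + x : ℕ) : ℤ) = ((Ng + y : ℕ) : ℤ) := hxy
      omega
    · intro i
      have h1 := hc1 (Ng + i) (by omega)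
      have h2 := hc2 (Ng + i) (by omega)
      have h3 := hgt (Ng + i) (by omega)
      simp only [Set.mem_Icc, Prod.le_def]
      unfold ww at h2
      omega
  have main : ∀ m : ℕ, Ng ≤ m →
      ((g (m : ℤ)).1 < mnx ∨ Mw < ww (g (m : ℤ))) → ∀ M : ℕ, SS f M (g (m : ℤ)) = 0 := by
    intro m hm hcase M
    obtain ⟨hqa, hqb, -⟩ := hgt m hm
    set q := g (m : ℤ) with hqdef
    rw [SS]
    apply Finset.sum_eq_zero
    intro n _
    apply ind_false
    rintro ⟨hs, hxc⟩
    by_cases hn1 : (Nf : ℤ) ≤ n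
    · have t1 := tailI ht (n := n) hn1
      have t2 := tailI ht (n := n + 1) (by omega)
      have hb := hexAdj_bounds (hfc n).1
      unfold Strad at hs
      unfold ww at *
      omega
    · by_cases hn2 : n ≤ -(Nf : ℤ) - 1
      · have t1 := tailIII ht (n := n) (by omega)
        have t2 := tailIII ht (n := n + 1) (by omega)
        have hb := hexAdj_bounds (hfc n).1
        unfold Strad at hs
        unfold ww at *
        omega
      · have k1m := hmnx _ (hKmem n (by omega) (by omega))
        have k2m := hmnx _ (hKmem (n + 1) (by omega) (by omega))
        have k1w := hMw _ (hKmem n (by omega) (by omega))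
        have k2w := hMw _ (hKmem (n + 1) (by omega) (by omega))
        have hb := hexAdj_bounds (hfc n).1
        unfold Strad at hs
        unfold ww at *
        rcases hcase with hcx | hcw <;> omega
  rcases dich with ⟨m, hm, hx⟩ | ⟨m, hm, hw⟩
  · exact ⟨m, hm, main m hm (Or.inl hx)⟩
  · exact ⟨m, hm, main m hm (Or.inr hw)⟩

end Chains

end InfHexAux

/-- For any coloring and any fixed origin, not both players win with respect to that
origin. -/
theorem infinite_hex_fixed_origin_at_most_one_winner
    (c : ℤ × ℤ → Option Bool) (a b : ℤ) :
    ¬ (RedWinsFixedOrigin c a b ∧ BlueWinsFixedOrigin c a b) := by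
  open InfHexAux in
  rintro ⟨⟨f, hfinj, hfc, Nf, hft⟩, ⟨g, hginj, hgc, Ng, hgt⟩⟩
  have hft' : InfHexAux.RTail f a b Nf := hft
  have hgt' : InfHexAux.BTail g a b Ng := hgt
  obtain ⟨m1, hm1, M1, hM1Nf, hS1⟩ := InfHexAux.endIV hfinj hfc hft' hginj hgt'
  obtain ⟨m2, hm2, hS2⟩ := InfHexAux.endII hfinj hfc hft' hginj hgt'
  have chain : ∀ j : ℕ, ∃ M0 : ℕ, ∀ M : ℕ, M0 ≤ M →
      InfHexAux.SS f M (g (-(m1 : ℤ))) = InfHexAux.SS f M (g (-(m1 : ℤ) + (j : ℤ))) := by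
    intro j
    induction j with
    | zero => exact ⟨0, fun M _ => by norm_num⟩
    | succ j ih =>
      obtain ⟨M0, hM0⟩ := ih
      obtain ⟨M1', hM1'⟩ := InfHexAux.step hfinj hfc hft'
        (hgc (-(m1 : ℤ) + (j : ℤ))).1 (hgc _).2 (hgc _).2
      refine ⟨max M0 M1', fun M hM => ?_⟩
      have e : (-(m1 : ℤ) + ((j + 1 : ℕ) : ℤ)) = (-(m1 : ℤ) + (j : ℤ)) + 1 := by
        push_cast; ring
      rw [e, hM0 M (by omega)]
      exact hM1' M (by omega)
  obtain ⟨M0c, hMc⟩ := chain (m1 + m2)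
  have e2 : (-(m1 : ℤ) + ((m1 + m2 : ℕ) : ℤ)) = (m2 : ℤ) := by push_cast; ring
  set M := max M1 M0c with hMdef
  have h1 : InfHexAux.SS f M (g (-(m1 : ℤ))) = 1 := hS1 M (by omega)
  have h2 : InfHexAux.SS f M (g (-(m1 : ℤ))) = InfHexAux.SS f M (g (m2 : ℤ)) := by
    have h := hMc M (by omega)
    rwa [e2] at h
  have h3 : InfHexAux.SS f M (g (m2 : ℤ)) = 0 := hS2 M
  rw [h1, h3] at h2
  exact absurd h2 (by decide)
end

section
/- Only finite game values occur in infinite Hex: every game position of infinite Hex that has a game value for Red has a finite game value (its value is a natural number); and symmetrically for Blue. -/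
/-- Red fulfills the standard winning condition in the total coloring `χ`. -/
def RedWinsStdTotal (χ : ℤ × ℤ → Bool) : Prop :=
  RedWinsStd (fun q => some (χ q))

/-- Blue fulfills the standard winning condition in the total coloring `χ`. -/
def BlueWinsStdTotal (χ : ℤ × ℤ → Bool) : Prop :=
  BlueWinsStd (fun q => some (χ q))

/-- The total coloring `χ` agrees with the partial coloring `c` on all non-empty
cells. -/
def AgreesWith (c : ℤ × ℤ → Option Bool) (χ : ℤ × ℤ → Bool) : Prop :=
  ∀ q : ℤ × ℤ, ∀ b : Bool, c q = some b → χ q = b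

/-- The position with partial coloring `c` is won for the player of color `w`
(`true` = Red): every total coloring agreeing with `c` on the non-empty cells fulfills
that player's standard winning condition. -/
def WonBy (w : Bool) (c : ℤ × ℤ → Option Bool) : Prop :=
  ∀ χ : ℤ × ℤ → Bool, AgreesWith c χ →
    (if w then RedWinsStdTotal χ else BlueWinsStdTotal χ)

/-- `HexValAt w c t α` expresses that `α` arises by the game-value recursion for the
player of color `w` at the position `(c, t)` (with `t` the color of the player to
move): a `w`-won position has value `0`; if it is `w`'s turn and some move leads to a
position with value `α`, the position gets value `α + 1`; if it is the opponent's turn,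
the position is not yet won, and every opponent move leads to a position with a value,
the position gets the supremum of (a choice of) those values.  The game value of the
position is the least `α` with `HexValAt w c t α`, so that at a `w`-turn the successor
of the least value of a child is taken, and at an opponent turn the supremum of the
children's values. -/
inductive HexValAt (w : Bool) : (ℤ × ℤ → Option Bool) → Bool → Ordinal → Prop where
  | won {c : ℤ × ℤ → Option Bool} {t : Bool} :
      WonBy w c → HexValAt w c t 0
  | mover {c : ℤ × ℤ → Option Bool} {q : ℤ × ℤ} {α : Ordinal} :
      ¬ WonBy w c → c q = none →
      HexValAt w (Function.update c q (some w)) (!w) α →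
      HexValAt w c w (α + 1)
  | opp {c : ℤ × ℤ → Option Bool} (V : ∀ q : ℤ × ℤ, c q = none → Ordinal) :
      ¬ WonBy w c →
      (∀ (q : ℤ × ℤ) (h : c q = none),
        HexValAt w (Function.update c q (some (!w))) w (V q h)) →
      HexValAt w c (!w) (sSup {β : Ordinal | ∃ (q : ℤ × ℤ) (h : c q = none), V q h = β})

/-- `α` is the game value for the player of color `w` of the position `(c, t)`: the
least ordinal arising from the game-value recursion at this position. -/
def HexGameValue (w : Bool) (c : ℤ × ℤ → Option Bool) (t : Bool) (α : Ordinal) : Prop :=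
  HexValAt w c t α ∧ ∀ β : Ordinal, HexValAt w c t β → α ≤ β

namespace HexFin

universe u

abbrev Cell := ℤ × ℤ
abbrev Col := Cell → Option Bool

/-- The set of values chosen by `V` is bounded above. -/
lemma bddAbove_valSet {c : Col} (V : ∀ q : Cell, c q = none → Ordinal.{u}) :
    BddAbove {β : Ordinal.{u} | ∃ q h, V q h = β} := by
  have he : {β : Ordinal.{u} | ∃ q h, V q h = β}
      = Set.range (fun x : {q : Cell // c q = none} => V x.1 x.2) := by
    ext β
    constructor
    · rintro ⟨q, h, rfl⟩; exact ⟨⟨q, h⟩, rfl⟩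
    · rintro ⟨⟨q, h⟩, rfl⟩; exact ⟨q, h, rfl⟩
  rw [he]
  exact Ordinal.bddAbove_range _

lemma sSup_le_of_forall {S : Set Ordinal.{u}} {b : Ordinal.{u}} (h : ∀ x ∈ S, x ≤ b) :
    sSup S ≤ b := by
  rcases S.eq_empty_or_nonempty with rfl | hne
  · rw [csSup_empty]; exact bot_le
  · exact csSup_le hne h

lemma lt_add_one' (a : Ordinal.{u}) : a < a + 1 := by
  rw [Ordinal.add_one_eq_succ]; exact Order.lt_succ a

lemma add_one_le_add_one {a b : Ordinal.{u}} (h : a ≤ b) : a + 1 ≤ b + 1 := by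
  rw [Ordinal.add_one_eq_succ, Ordinal.add_one_eq_succ]; exact Order.succ_le_succ h

lemma le_of_lt_add_one {a b : Ordinal.{u}} (h : a < b + 1) : a ≤ b := by
  rwa [Ordinal.add_one_eq_succ, Order.lt_succ_iff] at h

/-- Inversion of a derivation at the mover's turn. -/
lemma mover_inv {w : Bool} {c : Col} {t : Bool} {β : Ordinal.{u}}
    (D : HexValAt w c t β) (ht : t = w) :
    WonBy w c ∨ ∃ (q : Cell) (_ : c q = none) (β₀ : Ordinal.{u}), β = β₀ + 1 ∧ ¬ WonBy w c ∧
      HexValAt w (Function.update c q (some w)) (!w) β₀ := by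
  cases D with
  | won h => exact Or.inl h
  | mover hnw hq D₀ => exact Or.inr ⟨_, hq, _, rfl, hnw, D₀⟩
  | opp V hnw hV => exact absurd ht (Bool.not_ne_self w)

/-- Inversion of a derivation at the opponent's turn. -/
lemma opp_inv {w : Bool} {c : Col} {t : Bool} {β : Ordinal.{u}}
    (D : HexValAt w c t β) (ht : t = !w) :
    WonBy w c ∨ ∃ V : ∀ q : Cell, c q = none → Ordinal.{u}, ¬ WonBy w c ∧
      (∀ q h, HexValAt w (Function.update c q (some (!w))) w (V q h)) ∧
      β = sSup {β' : Ordinal.{u} | ∃ q h, V q h = β'} := by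
  cases D with
  | won h => exact Or.inl h
  | mover hnw hq D₀ => exact absurd ht (Ne.symm (Bool.not_ne_self w))
  | opp V hnw hV => exact Or.inr ⟨V, hnw, hV, rfl⟩

/-- Monotonicity: winning depends only on having enough own stones. -/
lemma won_mono {w : Bool} {c c' : Col} (h : ∀ p, c p = some w → c' p = some w) :
    WonBy w c → WonBy w c' := by
  intro hc χ' hχ'
  set χ : Cell → Bool := fun p => if c p = some w then w else !w with hχdef
  have hag : AgreesWith c χ := by
    intro q b hb
    by_cases hbw : b = w
    · subst hbw; simp [hχdef, hb]
    · have hne : ¬ (c q = some w) := by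
        rw [hb]; intro h2; exact hbw (Option.some.inj h2)
      have : b = !w := by cases b <;> cases w <;> simp_all
      simp [hχdef, hne, this]
  have hwin := hc χ hag
  have key : ∀ p, χ p = w → χ' p = w := by
    intro p hp
    have hcp : c p = some w := by
      by_contra hne
      rw [hχdef] at hp
      simp only [if_neg hne] at hp
      exact Bool.not_ne_self w hp
    exact hχ' p w (h p hcp)
  cases w with
  | false =>
    rw [if_neg (by simp)] at hwin ⊢
    obtain ⟨f, hf, hconv⟩ := hwin
    refine ⟨f, fun n => ⟨(hf n).1, ?_⟩, hconv⟩
    have h2 := (hf n).2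
    simp only [Option.some.injEq] at h2 ⊢
    exact key _ h2
  | true =>
    rw [if_pos rfl] at hwin ⊢
    obtain ⟨f, hf, hconv⟩ := hwin
    refine ⟨f, fun n => ⟨(hf n).1, ?_⟩, hconv⟩
    have h2 := (hf n).2
    simp only [Option.some.injEq] at h2 ⊢
    exact key _ h2


/-- Placing opponent stones on all cells of a finite set. -/
def blueOn (w : Bool) (c : Col) (B : Finset Cell) : Col :=
  fun p => if p ∈ B then some (!w) else c p

lemma blueOn_none_iff {w : Bool} {c : Col} {B : Finset Cell} {p : Cell} :
    blueOn w c B p = none ↔ p ∉ B ∧ c p = none := by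
  unfold blueOn; split_ifs with h <;> simp [h]

lemma blueOn_update {w : Bool} {c : Col} {B : Finset Cell} {q : Cell} {v : Option Bool}
    (hq : q ∉ B) :
    blueOn w (Function.update c q v) B = Function.update (blueOn w c B) q v := by
  funext p
  by_cases hp : p ∈ B
  · have hpq : p ≠ q := fun e => hq (e ▸ hp)
    simp [blueOn, hp, Function.update_of_ne hpq]
  · by_cases hpq : p = q
    · subst hpq; simp [blueOn, hp]
    · simp [blueOn, hp, Function.update_of_ne hpq]

lemma blueOn_insert {w : Bool} {c : Col} {B : Finset Cell} {q : Cell} :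
    blueOn w c (insert q B) = Function.update (blueOn w c B) q (some (!w)) := by
  funext p
  by_cases hpq : p = q
  · subst hpq; simp [blueOn]
  · by_cases hp : p ∈ B <;> simp [blueOn, hp, hpq, Function.update_of_ne hpq]

lemma blueOn_singleton {w : Bool} {c : Col} {b : Cell} :
    blueOn w c {b} = Function.update c b (some (!w)) := by
  funext p
  by_cases hpb : p = b
  · subst hpb; simp [blueOn]
  · simp [blueOn, hpb, Function.update_of_ne hpb]

/-- Infinitude of empty cells is preserved by modifying finitely many cells. -/
lemma emp_inf_mod {c c' : Col} (hinf : {p | c p = none}.Infinite)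
    (F : Finset Cell) (h : ∀ p, p ∉ F → c' p = c p) : {p | c' p = none}.Infinite := by
  apply Set.Infinite.mono (s := {p | c p = none} \ (F : Set Cell))
  · intro p hp
    have := h p (by simpa using hp.2)
    simp only [Set.mem_setOf_eq] at hp ⊢
    rw [this]; exact hp.1
  · exact hinf.diff F.finite_toSet

lemma emp_inf_update {c : Col} (hinf : {p | c p = none}.Infinite) (q : Cell)
    (v : Option Bool) : {p | Function.update c q v p = none}.Infinite :=
  emp_inf_mod hinf {q} (fun p hp => Function.update_of_ne (by simpa using hp) _ _)

lemma emp_inf_blueOn {w : Bool} {c : Col} (hinf : {p | c p = none}.Infinite)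
    (B : Finset Cell) : {p | blueOn w c B p = none}.Infinite :=
  emp_inf_mod hinf B (fun p hp => by simp [blueOn, hp])

/-- Not-won is preserved when adding opponent stones on empty cells. -/
lemma won_of_update_not {w : Bool} {c : Col} {q : Cell} {v : Option Bool}
    (hv : v ≠ some w) (hW : WonBy w (Function.update c q v)) : WonBy w c := by
  refine won_mono (c := Function.update c q v) (fun p hp => ?_) hW
  by_cases hpq : p = q
  · subst hpq
    rw [Function.update_self] at hp
    exact absurd hp hv
  · rwa [Function.update_of_ne hpq] at hp

lemma won_update_of_won {w : Bool} {c : Col} {q : Cell} {v : Option Bool}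
    (hq : c q ≠ some w) (hW : WonBy w c) : WonBy w (Function.update c q v) := by
  refine won_mono (c := c) (fun p hp => ?_) hW
  by_cases hpq : p = q
  · subst hpq; exact absurd hp hq
  · rwa [Function.update_of_ne hpq]

lemma not_won_update {w : Bool} {c : Col} {q : Cell}
    (hnw : ¬ WonBy w c) : ¬ WonBy w (Function.update c q (some (!w))) := by
  intro hW
  exact hnw (won_of_update_not (by simp) hW)

lemma won_of_blueOn {w : Bool} {c : Col} {B : Finset Cell}
    (hW : WonBy w (blueOn w c B)) : WonBy w c := by
  refine won_mono (c := blueOn w c B) (fun p hp => ?_) hW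
  unfold blueOn at hp
  split_ifs at hp with h
  · exact absurd (Option.some.inj hp) (Bool.not_ne_self w)
  · exact hp

lemma not_won_blueOn {w : Bool} {c : Col} {B : Finset Cell}
    (hnw : ¬ WonBy w c) : ¬ WonBy w (blueOn w c B) :=
  fun hW => hnw (won_of_blueOn hW)

/-- Removing a single opponent (blue) stone can only help `w`:
from a valuation of `c₂` with an extra blue stone at `d`, produce one of `c₂`
of value at most as large. -/
lemma removeBlue {w : Bool} {c1 : Col} {t : Bool} {β : Ordinal.{u}}
    (D : HexValAt w c1 t β) :
    ∀ (d : Cell) (c2 : Col), c2 d = none →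
    c1 = Function.update c2 d (some (!w)) → {p | c1 p = none}.Infinite →
    ∃ γ ≤ β, HexValAt w c2 t γ := by
  induction D with
  | @won c t hW =>
    intro d c2 hd hc1 hinf
    refine ⟨0, le_refl _, HexValAt.won ?_⟩
    subst hc1
    exact won_of_update_not (by simp) hW
  | @mover c q α hnw hq D₀ IH =>
    intro d c2 hd hc1 hinf
    have hqd : q ≠ d := by
      intro e
      rw [hc1, e, Function.update_self] at hq
      cases hq
    have hdq : d ≠ q := fun e => hqd e.symm
    have hq2 : c2 q = none := by
      rw [hc1, Function.update_of_ne hqd] at hq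
      exact hq
    have hnw2 : ¬ WonBy w c2 := by
      intro hW
      exact hnw (hc1 ▸ won_update_of_won (by rw [hd]; simp) hW)
    have heq : Function.update c q (some w)
        = Function.update (Function.update c2 q (some w)) d (some (!w)) := by
      rw [hc1]
      exact Function.update_comm hdq _ _ _
    obtain ⟨γ₀, hγ₀, D'⟩ := IH d (Function.update c2 q (some w))
      (by rw [Function.update_of_ne hdq]; exact hd) heq
      (emp_inf_update hinf q _)
    exact ⟨γ₀ + 1, add_one_le_add_one hγ₀, HexValAt.mover hnw2 hq2 D'⟩
  | @opp c V hnw hV IH =>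
    intro d c2 hd hc1 hinf
    have hnw2 : ¬ WonBy w c2 := by
      intro hW
      exact hnw (hc1 ▸ won_update_of_won (by rw [hd]; simp) hW)
    obtain ⟨e, he⟩ := hinf.nonempty
    have he' : c e = none := he
    have key : ∀ (q : Cell) (h2 : c2 q = none),
        ∃ γ, γ ≤ sSup {β' : Ordinal.{u} | ∃ q h, V q h = β'} ∧
          HexValAt w (Function.update c2 q (some (!w))) w γ := by
      intro q h2
      by_cases hqd : q = d
      · subst hqd
        obtain ⟨γ, hγ, D'⟩ := IH e he' e c he' rfl (emp_inf_update hinf e _)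
        refine ⟨γ, le_trans hγ (le_csSup (bddAbove_valSet V) ⟨e, he', rfl⟩), ?_⟩
        rw [← hc1]
        exact D'
      · have hdq : d ≠ q := fun x => hqd x.symm
        have h1 : c q = none := by
          rw [hc1, Function.update_of_ne hqd]
          exact h2
        have heq : Function.update c q (some (!w))
            = Function.update (Function.update c2 q (some (!w))) d (some (!w)) := by
          rw [hc1]
          exact Function.update_comm hdq _ _ _
        obtain ⟨γ, hγ, D'⟩ := IH q h1 d (Function.update c2 q (some (!w)))
          (by rw [Function.update_of_ne hdq]; exact hd) heq
          (emp_inf_update hinf q _)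
        exact ⟨γ, le_trans hγ (le_csSup (bddAbove_valSet V) ⟨q, h1, rfl⟩), D'⟩
    choose Vf h1 h2 using key
    refine ⟨sSup {β' : Ordinal.{u} | ∃ q h, Vf q h = β'}, ?_, HexValAt.opp Vf hnw2 h2⟩
    apply sSup_le_of_forall
    rintro x ⟨q, h, rfl⟩
    exact h1 q h

/-- Positions with finitely many empty cells have value bounded by the number
of empty cells. -/
lemma finite_emp_val {w : Bool} {c : Col} {t : Bool} {β : Ordinal.{u}}
    (D : HexValAt w c t β) :
    {p | c p = none}.Finite →
    ∃ γ ≤ (({p | c p = none}.ncard : ℕ) : Ordinal.{u}), HexValAt w c t γ := by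
  induction D with
  | @won c t hW =>
    intro _
    exact ⟨0, zero_le, HexValAt.won hW⟩
  | @mover c q α hnw hq D₀ IH =>
    intro hfin
    have hempeq : {p | Function.update c q (some w) p = none}
        = {p | c p = none} \ {q} := by
      ext p
      by_cases hpq : p = q
      · subst hpq; simp [Function.update_self]
      · simp [Function.update_of_ne hpq, hpq]
    have hfin' : {p | Function.update c q (some w) p = none}.Finite := by
      rw [hempeq]; exact hfin.diff
    obtain ⟨γ, hγ, D'⟩ := IH hfin'
    refine ⟨γ + 1, ?_, HexValAt.mover hnw hq D'⟩
    rw [hempeq] at hγ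
    have hcard : ({p | c p = none} \ {q}).ncard + 1 = {p | c p = none}.ncard :=
      Set.ncard_diff_singleton_add_one hq hfin
    calc γ + 1 ≤ ((({p | c p = none} \ {q}).ncard : ℕ) : Ordinal.{u}) + 1 :=
          add_one_le_add_one hγ
      _ = ((({p | c p = none} \ {q}).ncard + 1 : ℕ) : Ordinal.{u}) := by
          rw [Nat.cast_add, Nat.cast_one]
      _ = (({p | c p = none}.ncard : ℕ) : Ordinal.{u}) := by rw [hcard]
  | @opp c V hnw hV IH =>
    intro hfin
    have key : ∀ (q : Cell) (h : c q = none),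
        ∃ γ, γ ≤ (({p | c p = none}.ncard : ℕ) : Ordinal.{u}) ∧
          HexValAt w (Function.update c q (some (!w))) w γ := by
      intro q h
      have hempeq : {p | Function.update c q (some (!w)) p = none}
          = {p | c p = none} \ {q} := by
        ext p
        by_cases hpq : p = q
        · subst hpq; simp [Function.update_self]
        · simp [Function.update_of_ne hpq, hpq]
      have hfin' : {p | Function.update c q (some (!w)) p = none}.Finite := by
        rw [hempeq]; exact hfin.diff
      obtain ⟨γ, hγ, D'⟩ := IH q h hfin'
      refine ⟨γ, le_trans hγ ?_, D'⟩
      rw [hempeq]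
      have := Set.ncard_diff_singleton_le {p | c p = none} q
      exact_mod_cast this
    choose Vf h1 h2 using key
    refine ⟨sSup {β' : Ordinal.{u} | ∃ q h, Vf q h = β'}, ?_, HexValAt.opp Vf hnw h2⟩
    apply sSup_le_of_forall
    rintro x ⟨q, h, rfl⟩
    exact h1 q h

/-- The finite-support lemma: a finite-value winning plan has a finite support set
outside of which extra opponent stones are harmless. -/
lemma support_lemma (w : Bool) : ∀ n : ℕ,
    (∀ (c : Col) (β : Ordinal.{u}), β ≤ (n : Ordinal.{u}) → HexValAt w c w β →
      {p | c p = none}.Infinite →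
      ∃ S : Finset Cell, ∀ B : Finset Cell, (∀ p ∈ B, c p = none) →
        (∀ p ∈ B, p ∉ S) → ∃ γ ≤ β, HexValAt w (blueOn w c B) w γ)
    ∧
    (∀ (c : Col) (β : Ordinal.{u}), β ≤ (n : Ordinal.{u}) → HexValAt w c (!w) β →
      {p | c p = none}.Infinite →
      ∃ S : Finset Cell, ∀ B : Finset Cell, (∀ p ∈ B, c p = none) →
        (∀ p ∈ B, p ∉ S) → ∃ γ ≤ β, HexValAt w (blueOn w c B) (!w) γ) := by
  intro n
  induction n using Nat.strong_induction_on with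
  | _ n IH =>
  classical
  have M : ∀ (c : Col) (β : Ordinal.{u}), β ≤ (n : Ordinal.{u}) → HexValAt w c w β →
      {p | c p = none}.Infinite →
      ∃ S : Finset Cell, ∀ B : Finset Cell, (∀ p ∈ B, c p = none) →
        (∀ p ∈ B, p ∉ S) → ∃ γ ≤ β, HexValAt w (blueOn w c B) w γ := by
    intro c β hβ D hinf
    rcases mover_inv D rfl with hW | ⟨q, hq, β₀, rfl, hnw, D₀⟩
    · refine ⟨∅, fun B hB _ => ⟨0, zero_le, HexValAt.won ?_⟩⟩
      refine won_mono (c := c) (fun p hp => ?_) hW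
      have hpB : p ∉ B := fun hmem => by rw [hB p hmem] at hp; cases hp
      simp [blueOn, hpB, hp]
    · have hn0 : n ≠ 0 := by
        rintro rfl
        simp only [Nat.cast_zero] at hβ
        exact absurd (lt_of_lt_of_le (lt_of_le_of_lt (zero_le (a := β₀))
          (lt_add_one' β₀)) hβ) (lt_irrefl 0)
      have hβ₀ : β₀ ≤ ((n - 1 : ℕ) : Ordinal.{u}) := by
        have h1 : β₀ < (n : Ordinal.{u}) := lt_of_lt_of_le (lt_add_one' β₀) hβ
        have h2 : (n : ℕ) = (n - 1) + 1 := by omega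
        rw [h2, Nat.cast_add, Nat.cast_one] at h1
        exact le_of_lt_add_one h1
      obtain ⟨S₀, hS₀⟩ := (IH (n - 1) (by omega)).2 _ β₀ hβ₀ D₀ (emp_inf_update hinf q _)
      refine ⟨insert q S₀, fun B hB hBS => ?_⟩
      have hqB : q ∉ B := fun h => hBS q h (Finset.mem_insert_self _ _)
      obtain ⟨γ, hγ, D'⟩ := hS₀ B
        (fun p hp => by
          rw [Function.update_of_ne (by rintro rfl; exact hqB hp)]
          exact hB p hp)
        (fun p hp hm => hBS p hp (Finset.mem_insert_of_mem hm))
      rw [blueOn_update hqB] at D'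
      exact ⟨γ + 1, add_one_le_add_one hγ,
        HexValAt.mover (not_won_blueOn hnw) (blueOn_none_iff.2 ⟨hqB, hq⟩) D'⟩
  refine ⟨M, ?_⟩
  intro c β hβ D hinf
  rcases opp_inv D rfl with hW | ⟨V, hnw, hV, rfl⟩
  · refine ⟨∅, fun B hB _ => ⟨0, zero_le, HexValAt.won ?_⟩⟩
    refine won_mono (c := c) (fun p hp => ?_) hW
    have hpB : p ∉ B := fun hmem => by rw [hB p hmem] at hp; cases hp
    simp [blueOn, hpB, hp]
  · have hVle : ∀ (q : Cell) (h : c q = none),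
        V q h ≤ sSup {β' : Ordinal.{u} | ∃ q h, V q h = β'} :=
      fun q h => le_csSup (bddAbove_valSet V) ⟨q, h, rfl⟩
    obtain ⟨d, hdmem⟩ := hinf.nonempty
    have hd : c d = none := hdmem
    have hMq : ∀ (q : Cell) (h : c q = none), ∃ Sq : Finset Cell,
        ∀ B : Finset Cell, (∀ p ∈ B, Function.update c q (some (!w)) p = none) →
          (∀ p ∈ B, p ∉ Sq) →
          ∃ γ ≤ V q h, HexValAt w (blueOn w (Function.update c q (some (!w))) B) w γ :=
      fun q h => M _ _ (le_trans (hVle q h) hβ) (hV q h) (emp_inf_update hinf q _)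
    choose Sof hSof using hMq
    refine ⟨(insert d (Sof d hd)) ∪ (insert d (Sof d hd)).biUnion
        (fun q => if h : c q = none then Sof q h else ∅),
      fun B hB hBS => ?_⟩
    have hBcore : ∀ p ∈ B, p ∉ insert d (Sof d hd) :=
      fun p hp hc => hBS p hp (Finset.mem_union_left _ hc)
    have hBSof : ∀ p ∈ B, ∀ (q : Cell) (h : c q = none),
        q ∈ insert d (Sof d hd) → p ∉ Sof q h := by
      intro p hp q h hqcore hmem
      exact hBS p hp (Finset.mem_union_right _
        (Finset.mem_biUnion.2 ⟨q, hqcore, by rw [dif_pos h]; exact hmem⟩))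
    have key : ∀ (q' : Cell) (h' : blueOn w c B q' = none),
        ∃ γ, γ ≤ sSup {β' : Ordinal.{u} | ∃ q h, V q h = β'} ∧
          HexValAt w (Function.update (blueOn w c B) q' (some (!w))) w γ := by
      intro q' h'
      obtain ⟨hq'B, hq'c⟩ := blueOn_none_iff.1 h'
      by_cases hc' : q' ∈ insert d (Sof d hd)
      · obtain ⟨γ, hγ, D'⟩ := hSof q' hq'c B
          (fun p hp => by
            rw [Function.update_of_ne (by rintro rfl; exact (hBcore p hp) hc')]
            exact hB p hp)
          (fun p hp => hBSof p hp q' hq'c hc')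
        rw [blueOn_update hq'B] at D'
        exact ⟨γ, le_trans hγ (hVle q' hq'c), D'⟩
      · have hq'd : q' ≠ d := fun e => hc' (by rw [e]; exact Finset.mem_insert_self d _)
        have hq'Sd : q' ∉ Sof d hd := fun hm => hc' (Finset.mem_insert_of_mem hm)
        have hdB : d ∉ B := fun hm => hBcore d hm (Finset.mem_insert_self d _)
        obtain ⟨γ, hγ, D'⟩ := hSof d hd (insert q' B)
          (by
            intro p hp
            rcases Finset.mem_insert.1 hp with rfl | hp
            · rw [Function.update_of_ne hq'd]; exact hq'c
            · rw [Function.update_of_ne (by rintro rfl; exact hdB hp)]; exact hB p hp)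
          (by
            intro p hp
            rcases Finset.mem_insert.1 hp with rfl | hp
            · exact hq'Sd
            · exact hBSof p hp d hd (Finset.mem_insert_self d _))
        have hd_ins : d ∉ insert q' B := by
          simp only [Finset.mem_insert]
          rintro (rfl | hm)
          · exact hq'd rfl
          · exact hdB hm
        rw [blueOn_update hd_ins, blueOn_insert] at D'
        obtain ⟨γ₂, hγ₂, D₂⟩ := removeBlue D' d
          (Function.update (blueOn w c B) q' (some (!w)))
          (by
            rw [Function.update_of_ne (fun e => hq'd e.symm)]
            exact blueOn_none_iff.2 ⟨hdB, hd⟩)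
          rfl
          (emp_inf_update (emp_inf_update (emp_inf_blueOn hinf B) q' _) d _)
        exact ⟨γ₂, le_trans hγ₂ (le_trans hγ (hVle d hd)), D₂⟩
    choose Vf h1 h2 using key
    refine ⟨sSup {β' : Ordinal.{u} | ∃ q h, Vf q h = β'}, ?_,
      HexValAt.opp Vf (not_won_blueOn hnw) h2⟩
    apply sSup_le_of_forall
    rintro x ⟨q, h, rfl⟩
    exact h1 q h

/-- At the mover's turn, a minimal value is finite provided all smaller game values
(anywhere) are finite. -/
lemma wturn_fin {w : Bool} {c : Col} {delta : Ordinal.{u}}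
    (IHP : ∀ β', β' < delta → ∀ (c' : Col) (t' : Bool),
      HexGameValue w c' t' β' → ∃ n : ℕ, β' = (n : Ordinal.{u}))
    (h : HexGameValue w c w delta) : ∃ n : ℕ, delta = (n : Ordinal.{u}) := by
  obtain ⟨D, hmin⟩ := h
  rcases mover_inv D rfl with hW | ⟨q, hq, β₀, rfl, hnw, D₀⟩
  · refine ⟨0, le_antisymm ?_ ?_⟩
    · simpa using hmin 0 (HexValAt.won hW)
    · simp
  · set S : Set Ordinal.{u} :=
      {β | HexValAt w (Function.update c q (some w)) (!w) β} with hS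
    have hne : S.Nonempty := ⟨β₀, D₀⟩
    have hmem : sInf S ∈ S := csInf_mem hne
    have hminS : ∀ β ∈ S, sInf S ≤ β := fun β hβ => csInf_le (OrderBot.bddBelow S) hβ
    have hlt : sInf S < β₀ + 1 := lt_of_le_of_lt (hminS β₀ D₀) (lt_add_one' β₀)
    obtain ⟨k, hk⟩ := IHP _ hlt _ _ ⟨hmem, fun β hb => hminS β hb⟩
    have D2 : HexValAt w c w ((k : Ordinal.{u}) + 1) :=
      HexValAt.mover hnw hq (hk ▸ hmem)
    have hle : β₀ + 1 ≤ (k : Ordinal.{u}) + 1 := hmin _ D2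
    have hlt2 : β₀ + 1 < Ordinal.omega0 := by
      refine lt_of_le_of_lt hle ?_
      rw [← Nat.cast_add_one]
      exact Ordinal.nat_lt_omega0 _
    exact Ordinal.lt_omega0.1 hlt2

/-- Main lemma: every game value is finite. -/
theorem main (w : Bool) : ∀ (α : Ordinal.{u}) (c : Col) (t : Bool),
    HexGameValue w c t α → ∃ n : ℕ, α = (n : Ordinal.{u}) := by
  intro α
  induction α using Ordinal.induction with
  | h α IH =>
  intro c t h
  by_cases htw : t = w
  · subst htw
    exact wturn_fin (fun β' hβ' c' t' hg => IH β' hβ' c' t' hg) h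
  · have ht : t = !w := by cases t <;> cases w <;> simp_all
    subst ht
    obtain ⟨D, hmin⟩ := h
    rcases opp_inv D rfl with hW | ⟨V, hnw, hV, hαeq⟩
    · refine ⟨0, le_antisymm ?_ ?_⟩
      · simpa using hmin 0 (HexValAt.won hW)
      · simp
    · by_cases hfin : {p | c p = none}.Finite
      · obtain ⟨γ, hγ, D'⟩ := finite_emp_val D hfin
        have h1 : α ≤ γ := hmin γ D'
        have h2 : α < Ordinal.omega0 :=
          lt_of_le_of_lt (le_trans h1 hγ) (Ordinal.nat_lt_omega0 _)
        exact Ordinal.lt_omega0.1 h2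
      · have hinf : {p | c p = none}.Infinite := hfin
        have hVle : ∀ (q : Cell) (h' : c q = none), V q h' ≤ α := by
          intro q h'
          rw [hαeq]
          exact le_csSup (bddAbove_valSet V) ⟨q, h', rfl⟩
        have hval : ∀ (q : Cell) (h' : c q = none), ∃ nq : ℕ,
            HexValAt w (Function.update c q (some (!w))) w ((nq : ℕ) : Ordinal.{u}) ∧
            ∀ β', HexValAt w (Function.update c q (some (!w))) w β' →
              ((nq : ℕ) : Ordinal.{u}) ≤ β' := by
          intro q h'
          set Sq : Set Ordinal.{u} :=
            {β | HexValAt w (Function.update c q (some (!w))) w β} with hSq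
          have hne : Sq.Nonempty := ⟨_, hV q h'⟩
          have hmem : sInf Sq ∈ Sq := csInf_mem hne
          have hminS : ∀ β ∈ Sq, sInf Sq ≤ β :=
            fun β hb => csInf_le (OrderBot.bddBelow _) hb
          have hle : sInf Sq ≤ α := le_trans (hminS _ (hV q h')) (hVle q h')
          have hfin2 : ∃ k : ℕ, sInf Sq = ((k : ℕ) : Ordinal.{u}) :=
            wturn_fin (fun β' hβ' c' t' hg =>
              IH β' (lt_of_lt_of_le hβ' hle) c' t' hg) ⟨hmem, fun β hb => hminS β hb⟩
          obtain ⟨k, hk⟩ := hfin2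
          exact ⟨k, hk ▸ hmem, fun β' hb => hk ▸ hminS β' hb⟩
        choose nfun hnd hnmin using hval
        obtain ⟨d, hdmem⟩ := hinf.nonempty
        have hd : c d = none := hdmem
        rcases mover_inv (hnd d hd) rfl with hWd | ⟨r, hr, β₀, heq, hnwd, D₀⟩
        · exact absurd (won_of_update_not (by simp) hWd) hnw
        · have hβ₀ω : β₀ < Ordinal.omega0 := by
            have h1 : β₀ < ((nfun d hd : ℕ) : Ordinal.{u}) := by
              rw [heq]; exact lt_add_one' β₀
            exact lt_trans h1 (Ordinal.nat_lt_omega0 _)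
          obtain ⟨k, hkeq⟩ := Ordinal.lt_omega0.1 hβ₀ω
          have hrd : r ≠ d := by
            intro e
            rw [e, Function.update_self] at hr
            cases hr
          have hrc : c r = none := by
            rwa [Function.update_of_ne hrd] at hr
          obtain ⟨S₀, hS₀⟩ := (support_lemma w k).2 _ β₀ (le_of_eq hkeq) D₀
            (emp_inf_update (emp_inf_update hinf d _) r _)
          classical
          set E : Finset Cell := insert d (insert r S₀) with hE
          set N : ℕ := max (nfun d hd)
            (E.sup (fun b => if hb : c b = none then nfun b hb else 0)) with hN
          have key : ∀ (b : Cell) (hb : c b = none),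
              ∃ γ, γ ≤ ((N : ℕ) : Ordinal.{u}) ∧
                HexValAt w (Function.update c b (some (!w))) w γ := by
            intro b hb
            by_cases hbE : b ∈ E
            · refine ⟨((nfun b hb : ℕ) : Ordinal.{u}), ?_, hnd b hb⟩
              have h1 : nfun b hb
                  ≤ E.sup (fun b => if hb : c b = none then nfun b hb else 0) := by
                have h2 := Finset.le_sup
                  (f := fun b => if hb : c b = none then nfun b hb else 0) hbE
                simpa only [dif_pos hb] using h2
              have h3 : nfun b hb ≤ N := le_trans h1 (le_max_right _ _)
              exact_mod_cast h3
            · have hbd : b ≠ d := by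
                rintro rfl
                exact hbE (by rw [hE]; exact Finset.mem_insert_self _ _)
              have hbr : b ≠ r := by
                rintro rfl
                exact hbE (by
                  rw [hE]
                  exact Finset.mem_insert_of_mem (Finset.mem_insert_self _ _))
              have hbS : b ∉ S₀ := fun hm => hbE (by
                rw [hE]
                exact Finset.mem_insert_of_mem (Finset.mem_insert_of_mem hm))
              obtain ⟨γ₁, hγ₁, D₁⟩ := hS₀ {b}
                (by
                  intro p hp
                  rw [Finset.mem_singleton] at hp
                  subst hp
                  rw [Function.update_of_ne hbr, Function.update_of_ne hbd]
                  exact hb)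
                (by
                  intro p hp
                  rw [Finset.mem_singleton] at hp
                  subst hp
                  exact hbS)
              rw [blueOn_singleton] at D₁
              have hpos : Function.update
                    (Function.update (Function.update c d (some (!w))) r (some w))
                    b (some (!w))
                  = Function.update
                    (Function.update (Function.update c b (some (!w))) r (some w))
                    d (some (!w)) := by
                rw [Function.update_comm (show r ≠ b from fun e => hbr e.symm),
                    Function.update_comm (show d ≠ b from fun e => hbd e.symm),
                    Function.update_comm (show d ≠ r from fun e => hrd e.symm)]
              rw [hpos] at D₁
              obtain ⟨γ₂, hγ₂, D₂⟩ := removeBlue D₁ d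
                (Function.update (Function.update c b (some (!w))) r (some w))
                (by
                  rw [Function.update_of_ne (show d ≠ r from fun e => hrd e.symm),
                      Function.update_of_ne hbd.symm]
                  exact hd)
                rfl
                (emp_inf_update (emp_inf_update (emp_inf_update hinf b _) r _) d _)
              refine ⟨γ₂ + 1, ?_, HexValAt.mover ?_ ?_ D₂⟩
              · have h1 : γ₂ + 1 ≤ β₀ + 1 := add_one_le_add_one (le_trans hγ₂ hγ₁)
                have h3 : ((nfun d hd : ℕ) : Ordinal.{u}) ≤ ((N : ℕ) : Ordinal.{u}) := by
                  exact_mod_cast le_max_left _ _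
                exact le_trans h1 (le_trans (le_of_eq heq.symm) h3)
              · exact not_won_update hnw
              · rw [Function.update_of_ne (show r ≠ b from fun e => hbr e.symm)]
                exact hrc
          choose Vf h1 h2 using key
          have Dfin : HexValAt w c (!w)
              (sSup {β' : Ordinal.{u} | ∃ q h', Vf q h' = β'}) :=
            HexValAt.opp Vf hnw h2
          have hαle : α ≤ ((N : ℕ) : Ordinal.{u}) := by
            refine le_trans (hmin _ Dfin) (sSup_le_of_forall ?_)
            rintro x ⟨q, h', rfl⟩
            exact h1 q h'
          exact Ordinal.lt_omega0.1 (lt_of_le_of_lt hαle (Ordinal.nat_lt_omega0 _))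

end HexFin

/-- Only finite game values occur in infinite Hex: every position having a game value
for a player (Red or Blue) has a finite game value. -/
theorem infinite_hex_only_finite_game_values
    (w : Bool) (c : ℤ × ℤ → Option Bool) (t : Bool) (α : Ordinal)
    (h : HexGameValue w c t α) : ∃ n : ℕ, α = (n : Ordinal) :=
  HexFin.main w α c t h
end
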